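/- arXiv:1503.00667 — 12 statements merged into one kernel-verified Lean document; each statement's English description precedes it below -/
import Mathlib

section
/- For a metric space Y the following three conditions are equivalent: (i) Y is not shifted; (ii) Y is a minimal universal metric space for the one-element family {Y}; (iii) there exists a family 𝔐 of metric spaces such that Y is minimal 𝔐-universal. -/
universe u v w

open Function Set

/-- `f` is an isometric (distance-preserving) embedding of metric spaces. -/
def IsIsomEmb {X : Type u} {Y : Type v} [MetricSpace X] [MetricSpace Y] (f : X → Y) : Prop :=
  ∀ a b : X, dist (f a) (f b) = dist a b

/-- `X` embeds isometrically into `Y`. -/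
def IsomEmbeds (X : Type u) (Y : Type v) [MetricSpace X] [MetricSpace Y] : Prop :=
  ∃ f : X → Y, IsIsomEmb f

/-- `X` and `Y` are isometric: there is a surjective isometric embedding of `X` onto `Y`. -/
def IsIsometricTo (X : Type u) (Y : Type v) [MetricSpace X] [MetricSpace Y] : Prop :=
  ∃ f : X → Y, IsIsomEmb f ∧ Surjective f

/-- `X` is not shifted: every isometric self-embedding of `X` is surjective. -/
def NotShifted (X : Type u) [MetricSpace X] : Prop :=
  ∀ f : X → X, IsIsomEmb f → Surjective f

/-- `Y` is universal for the family `M` of metric spaces. -/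
def UnivFor {ι : Type w} (M : ι → Type u) [∀ i, MetricSpace (M i)]
    (Y : Type v) [MetricSpace Y] : Prop :=
  ∀ i, IsomEmbeds (M i) Y

/-- `Y` is minimal universal for the family `M` of metric spaces: `Y` is `M`-universal and
every subset of `Y` (with the induced metric) which is `M`-universal equals `Y`. -/
def MinUnivFor {ι : Type w} (M : ι → Type u) [∀ i, MetricSpace (M i)]
    (Y : Type v) [MetricSpace Y] : Prop :=
  UnivFor M Y ∧ ∀ S : Set Y, UnivFor M ↥S → S = Set.univ

/-- A metric space `Y` is not shifted iff it is minimal universal for the one-element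
family `{Y}`, iff there exists a family of metric spaces for which `Y` is minimal
universal. -/
theorem statement0 (Y : Type u) [instY : MetricSpace Y] :
    (NotShifted Y ↔ MinUnivFor (fun _ : PUnit.{u + 1} => Y) Y) ∧
    (NotShifted Y ↔
      ∃ (ι : Type u) (M : ι → Type u) (instM : ∀ i, MetricSpace (M i)),
        @MinUnivFor ι M instM Y instY) := by
  have h1 : NotShifted Y → MinUnivFor (fun _ : PUnit.{u + 1} => Y) Y := by
    intro h
    refine ⟨fun _ => ⟨id, fun a b => rfl⟩, fun S hS => ?_⟩
    obtain ⟨f, hf⟩ := hS PUnit.unit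
    have hemb : IsIsomEmb (fun y => ((f y : S) : Y)) := fun a b => hf a b
    have hsurj := h _ hemb
    ext y
    simp only [Set.mem_univ, iff_true]
    obtain ⟨x, hx⟩ := hsurj y
    rw [← hx]; exact (f x).2
  have h2 : ∀ (ι : Type u) (M : ι → Type u) (instM : ∀ i, MetricSpace (M i)),
      @MinUnivFor ι M instM Y instY → NotShifted Y := by
    rintro ι M instM ⟨hU, hmin⟩ f hf
    have hu : UnivFor M ↥(Set.range f) := by
      intro i
      obtain ⟨g, hg⟩ := hU i
      refine ⟨fun x => ⟨f (g x), Set.mem_range_self _⟩, fun a b => ?_⟩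
      rw [Subtype.dist_eq]
      simp only
      rw [hf, hg]
    have hr := hmin _ hu
    intro y
    have : y ∈ Set.range f := hr ▸ Set.mem_univ y
    exact this
  constructor
  · exact ⟨h1, fun hm => h2 _ _ _ hm⟩
  · exact ⟨fun h => ⟨_, _, _, h1 h⟩, fun ⟨ι, M, instM, hm⟩ => h2 ι M instM hm⟩
end

section
/- Let 𝔜 be a family of metric spaces, let Y ∈ 𝔜, and suppose that every member of 𝔜 embeds isometrically into Y (i.e. Y is 𝔜-universal). Then the following are equivalent: (i) Y is not shifted; (ii) Y is minimal 𝔜-universal; (iii) there exists a minimal 𝔜-universal metric space X with X ∈ 𝔜; (iv) there exists a minimal 𝔜-universal metric space. -/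
universe u v w

open Function Set

lemma isomEmb_injective {X : Type u} {Y : Type v} [MetricSpace X] [MetricSpace Y]
    {f : X → Y} (hf : IsIsomEmb f) : Injective f := by
  intro a b h
  have := hf a b
  rw [h, dist_self] at this
  exact eq_of_dist_eq_zero this.symm

/-- If some metric space is minimal `M`-universal and `M i₀` is `M`-universal, then
`M i₀` is minimal `M`-universal. -/
lemma key_lemma {ι : Type w} (M : ι → Type u) [∀ i, MetricSpace (M i)]
    (i₀ : ι) (huniv : UnivFor M (M i₀))
    (X : Type v) [MetricSpace X] (hX : MinUnivFor M X) : MinUnivFor M (M i₀) := by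
  obtain ⟨hXu, hXmin⟩ := hX
  obtain ⟨h, hh⟩ := hXu i₀
  refine ⟨huniv, fun S hS => ?_⟩
  have hSX : UnivFor M ↥(h '' S) := by
    intro k
    obtain ⟨g, hg⟩ := hS k
    exact ⟨fun x => ⟨h (g x : M i₀), Set.mem_image_of_mem _ (g x).2⟩, fun a b => by
      rw [Subtype.dist_eq]
      exact (hh _ _).trans ((Subtype.dist_eq _ _).symm.trans (hg a b))⟩
  have himg := hXmin _ hSX
  ext y
  simp only [Set.mem_univ, iff_true]
  have : h y ∈ h '' S := himg ▸ Set.mem_univ _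
  obtain ⟨s, hs, hsy⟩ := this
  rwa [isomEmb_injective hh hsy] at hs

/-- If `Y = M i₀` is a member of the family `M` and is `M`-universal, then:
`Y` is not shifted ↔ `Y` is minimal `M`-universal ↔ some member of `M` is minimal
`M`-universal ↔ some metric space is minimal `M`-universal. -/
theorem statement1 {ι : Type w} (M : ι → Type u) [instM : ∀ i, MetricSpace (M i)]
    (i₀ : ι) (huniv : UnivFor M (M i₀)) :
    (NotShifted (M i₀) ↔ MinUnivFor M (M i₀)) ∧
    (MinUnivFor M (M i₀) ↔ ∃ j, MinUnivFor M (M j)) ∧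
    ((∃ j, MinUnivFor M (M j)) ↔
      ∃ (X : Type u) (instX : MetricSpace X), @MinUnivFor ι M instM X instX) := by
  refine ⟨⟨fun hns => ⟨huniv, fun S hS => ?_⟩, fun hmin f hf => ?_⟩, ?_, ?_⟩
  · -- NotShifted → minimal
    obtain ⟨g, hg⟩ := hS i₀
    have hg' : IsIsomEmb (fun x => (g x : M i₀)) := fun a b =>
      (Subtype.dist_eq _ _).symm.trans (hg a b)
    have hsurj := hns _ hg'
    ext y
    simp only [Set.mem_univ, iff_true]
    obtain ⟨x, hx⟩ := hsurj y
    exact hx ▸ (g x).2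
  · -- minimal → NotShifted
    have hrange : UnivFor M ↥(Set.range f) := by
      intro k
      obtain ⟨g, hg⟩ := huniv k
      exact ⟨fun x => ⟨f (g x), Set.mem_range_self _⟩, fun a b => by
        rw [Subtype.dist_eq]
        exact (hf _ _).trans (hg a b)⟩
    have := hmin.2 _ hrange
    rw [← Set.range_eq_univ]
    exact this
  · exact ⟨fun h => ⟨i₀, h⟩, fun ⟨j, hj⟩ => key_lemma M i₀ huniv (M j) hj⟩
  · exact ⟨fun ⟨j, hj⟩ => ⟨M j, inferInstance, hj⟩,
      fun ⟨X, instX, hX⟩ => ⟨i₀, key_lemma M i₀ huniv X hX⟩⟩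
end

section
/- Let 𝔜 be a family of compact metric spaces. Then the following are equivalent: (i) there is a minimal 𝔜-universal metric space belonging to 𝔜; (ii) there is a 𝔜-universal metric space belonging to 𝔜. -/
universe u v w

open Function Set

lemma iter_isom {X : Type u} [MetricSpace X] {f : X → X} (hf : IsIsomEmb f) :
    ∀ n, IsIsomEmb (f^[n]) := by
  intro n
  induction n with
  | zero => intro a b; simp
  | succ k ih => intro a b; rw [Function.iterate_succ_apply', Function.iterate_succ_apply', hf]; exact ih a b

lemma compact_notShifted {X : Type u} [MetricSpace X] [CompactSpace X]
    {f : X → X} (hf : IsIsomEmb f) : Surjective f := by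
  intro y
  by_contra h
  have hy : y ∉ Set.range f := by rintro ⟨x, rfl⟩; exact h ⟨x, rfl⟩
  have hiso : Isometry f := Isometry.of_dist_eq hf
  have hclosed : IsClosed (Set.range f) :=
    (isCompact_range hiso.continuous).isClosed
  have hne : (Set.range f).Nonempty := ⟨f y, mem_range_self y⟩
  have hε : 0 < Metric.infDist y (Set.range f) :=
    (hclosed.notMem_iff_infDist_pos hne).mp hy
  set ε := Metric.infDist y (Set.range f) with hεdef
  set u : ℕ → X := fun n => f^[n] y with hu
  have key : ∀ n m : ℕ, n < m → ε ≤ dist (u n) (u m) := by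
    intro n m hnm
    have h1 : u m = f^[n] (f^[m - n] y) := by
      rw [hu]; simp only [← Function.iterate_add_apply]
      congr 1; omega
    have h2 : dist (u n) (u m) = dist y (f^[m - n] y) := by
      rw [h1, hu]; exact iter_isom hf n y _
    rw [h2]
    apply Metric.infDist_le_dist_of_mem
    have : f^[m - n] y = f (f^[m - n - 1] y) := by
      conv_lhs => rw [show m - n = (m - n - 1) + 1 by omega]
      rw [Function.iterate_succ_apply']
    exact ⟨_, this.symm⟩
  obtain ⟨x, -, φ, hφ, hlim⟩ :=
    isCompact_univ.tendsto_subseq (fun n => Set.mem_univ (u n))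
  have hcauchy := hlim.cauchySeq
  rw [Metric.cauchySeq_iff] at hcauchy
  obtain ⟨N, hN⟩ := hcauchy ε hε
  have := hN N (by omega) (N + 1) (by omega)
  exact absurd this (not_lt.mpr (key _ _ (hφ.lt_iff_lt.mpr (by omega))))

/-- For a family `M` of compact metric spaces: some member of `M` is minimal `M`-universal
iff some member of `M` is `M`-universal. -/
theorem statement4 {ι : Type w} (M : ι → Type u) [∀ i, MetricSpace (M i)]
    [∀ i, CompactSpace (M i)] :
    (∃ i, MinUnivFor M (M i)) ↔ (∃ i, UnivFor M (M i)) := by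
  constructor
  · rintro ⟨i, hi⟩; exact ⟨i, hi.1⟩
  · rintro ⟨i, hi⟩
    refine ⟨i, hi, fun S hS => ?_⟩
    obtain ⟨f, hf⟩ := hS i
    have hg : IsIsomEmb (fun x => (f x : M i)) := fun a b => hf a b
    have hsurj : Surjective (fun x => (f x : M i)) := compact_notShifted hg
    rw [Set.eq_univ_iff_forall]
    intro y
    obtain ⟨x, hx⟩ := hsurj y
    rw [← hx]; exact (f x).2
end

section
/- Every boundedly compact homogeneous metric space is not shifted; that is, if X is a metric space in which every closed bounded subset is compact, and for every pair of points x, y ∈ X there exists an isometric embedding f : X → X with f(x) = y, then every isometric self-embedding of X is surjective. -/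
universe u v w

open Function Set

lemma key_compact {X : Type*} [MetricSpace X] (h : X → X) (hiso : Isometry h)
    {K : Set X} (hK : IsCompact K) (hmaps : MapsTo h K K) {z : X} (hz : z ∈ K) :
    z ∈ h '' K := by
  set u : ℕ → X := fun n => h^[n] z with hu_def
  have hitiso : ∀ k : ℕ, Isometry (h^[k]) := by
    intro k
    induction k with
    | zero => simpa using isometry_id
    | succ k ih =>
      rw [Function.iterate_succ]
      exact ih.comp hiso
  have hu : ∀ n, u n ∈ K := by
    intro n
    induction n with
    | zero => exact hz
    | succ n ih =>
      have : u (n+1) = h (u n) := by simp [hu_def, Function.iterate_succ_apply']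
      rw [this]; exact hmaps ih
  obtain ⟨l, _, φ, hφ, hconv⟩ := hK.tendsto_subseq hu
  have hclosed : IsClosed (h '' K) := (hK.image hiso.continuous).isClosed
  rw [← hclosed.closure_eq]
  rw [Metric.mem_closure_iff]
  intro ε hε
  obtain ⟨N, hN⟩ := (Metric.tendsto_atTop.mp hconv) (ε/2) (by linarith)
  have h1 : dist (u (φ N)) (u (φ (N+1))) < ε := by
    calc dist (u (φ N)) (u (φ (N+1))) ≤ dist (u (φ N)) l + dist (u (φ (N+1))) l :=
          dist_triangle_right _ _ _
      _ < ε/2 + ε/2 := add_lt_add (hN N le_rfl) (hN (N+1) (by omega))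
      _ = ε := by ring
  have hlt : φ N < φ (N+1) := hφ (by omega)
  set k := φ (N+1) - φ N with hk
  have hk1 : 1 ≤ k := by omega
  have hsum : φ N + k = φ (N+1) := by omega
  have heq : u (φ (N+1)) = h^[φ N] (u k) := by
    rw [hu_def]; simp only []
    rw [← hsum, Function.iterate_add_apply]
  have hdist : dist z (u k) < ε := by
    have := hitiso (φ N)
    have h2 : dist (h^[φ N] z) (h^[φ N] (u k)) = dist z (u k) := this.dist_eq _ _
    rw [← h2, ← heq]
    exact h1
  refine ⟨u k, ?_, hdist⟩
  have : u k = h (u (k-1)) := by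
    rw [hu_def]; simp only []
    conv_lhs => rw [show k = (k-1) + 1 by omega]
    rw [Function.iterate_succ_apply']
  rw [this]
  exact ⟨u (k-1), hu _, rfl⟩

/-- Every boundedly compact homogeneous metric space is not shifted. -/
theorem statement5 {X : Type u} [MetricSpace X]
    (hbc : ∀ s : Set X, IsClosed s → Bornology.IsBounded s → IsCompact s)
    (hhom : ∀ x y : X, ∃ f : X → X, IsIsomEmb f ∧ f x = y) :
    NotShifted X := by
  intro f hf t
  obtain ⟨g, hg, hgt⟩ := hhom (f t) t
  have hgi : Isometry g := Isometry.of_dist_eq hg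
  have hfi : Isometry f := Isometry.of_dist_eq hf
  set h := g ∘ f with hh
  have hhi : Isometry h := hgi.comp hfi
  have hht : h t = t := by simp [hh, hgt]
  set R := dist (g t) t with hR
  set K := Metric.closedBall t R with hKdef
  have hKcomp : IsCompact K := hbc _ Metric.isClosed_closedBall Metric.isBounded_closedBall
  have hmaps : MapsTo h K K := by
    intro x hx
    simp only [hKdef, Metric.mem_closedBall] at hx ⊢
    calc dist (h x) t = dist (h x) (h t) := by rw [hht]
      _ = dist x t := hhi.dist_eq _ _
      _ ≤ R := hx
  have hz : g t ∈ K := by simp [hKdef, hR]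
  obtain ⟨w, _, hw⟩ := key_compact h hhi hKcomp hmaps hz
  exact ⟨w, hgi.injective hw⟩
end

section
/- Every strongly rigid metric space is not shifted: if X is a metric space such that for all x, y, u, v ∈ X the conditions dist(x, y) = dist(u, v) and x ≠ y imply {x, y} = {u, v}, then every isometric self-embedding of X is surjective. -/
universe u v w

open Function Set

/-- Every strongly rigid metric space is not shifted. -/
theorem statement6 {X : Type u} [MetricSpace X]
    (hsr : ∀ x y u v : X, dist x y = dist u v → x ≠ y → ({x, y} : Set X) = {u, v}) :
    NotShifted X := by
  intro f hf a
  by_cases h : ∃ b : X, b ≠ a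
  · obtain ⟨b, hb⟩ := h
    have key : ({a, b} : Set X) = {f a, f b} :=
      hsr a b (f a) (f b) (hf a b).symm (Ne.symm hb)
    have ha : a ∈ ({f a, f b} : Set X) := key ▸ Set.mem_insert a {b}
    rcases ha with h1 | h2
    · exact ⟨a, h1.symm⟩
    · exact ⟨b, h2.symm⟩
  · push_neg at h
    exact ⟨a, h (f a)⟩
end

section
/- Let 𝔐 be a family of metric spaces and let X ∈ 𝔐 be boundedly compact, homogeneous and 𝔐-universal. Then X is minimal 𝔐-universal; moreover, every minimal 𝔐-universal metric space Y is isometric to X, and every 𝔐-universal metric space Y belonging to 𝔐 is isometric to X. -/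
universe u v w

open Function Set

lemma isomEmb_iterate {X : Type u} [MetricSpace X] {f : X → X} (hf : IsIsomEmb f) (n : ℕ) :
    IsIsomEmb (f^[n]) := by
  induction n with
  | zero => intro a b; simp
  | succ n ih =>
    intro a b
    rw [Function.iterate_succ_apply', Function.iterate_succ_apply', hf]
    exact ih a b

lemma surj_of_fixed {X : Type u} [MetricSpace X]
    (hbc : ∀ s : Set X, IsClosed s → Bornology.IsBounded s → IsCompact s)
    {h : X → X} (hh : IsIsomEmb h) {y : X} (hy : h y = y) :
    Surjective h := by
  intro t
  set K := Metric.closedBall y (dist t y) with hK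
  have hKc : IsCompact K := hbc K Metric.isClosed_closedBall Metric.isBounded_closedBall
  have hiso : Isometry h := Isometry.of_dist_eq hh
  have hitfix : ∀ n, h^[n] y = y := fun n => Function.iterate_fixed hy n
  have hmem : ∀ n, h^[n] t ∈ K := by
    intro n
    simp only [hK, Metric.mem_closedBall]
    calc dist (h^[n] t) y = dist (h^[n] t) (h^[n] y) := by rw [hitfix]
    _ = dist t y := isomEmb_iterate hh n t y
    _ ≤ dist t y := le_rfl
  have himg : IsCompact (h '' K) := hKc.image hiso.continuous
  have hcl : t ∈ closure (h '' K) := by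
    rw [Metric.mem_closure_iff]
    intro ε hε
    obtain ⟨L, _, φ, hφ, hconv⟩ := hKc.tendsto_subseq hmem
    rw [Metric.tendsto_atTop] at hconv
    obtain ⟨N, hN⟩ := hconv (ε/2) (by linarith)
    have h1 := hN N le_rfl
    have h2 := hN (N+1) (by omega)
    have hlt : φ N < φ (N+1) := hφ (by omega)
    set k := φ (N+1) - φ N with hk
    have hco : h^[φ N] (h^[k] t) = h^[φ (N+1)] t := by
      rw [← Function.iterate_add_apply]; congr 1; omega
    refine ⟨h^[k] t, ?_, ?_⟩
    · have hke : h^[k] t = h (h^[k-1] t) := by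
        conv_lhs => rw [show k = (k-1)+1 by omega]
        rw [Function.iterate_succ_apply']
      rw [hke]
      exact mem_image_of_mem h (hmem _)
    · have heq : dist t (h^[k] t) = dist (h^[φ N] t) (h^[φ (N+1)] t) := by
        rw [← hco]; exact ((isomEmb_iterate hh (φ N)) t (h^[k] t)).symm
      rw [heq]
      calc dist (h^[φ N] t) (h^[φ (N+1)] t)
          ≤ dist (h^[φ N] t) L + dist L (h^[φ (N+1)] t) := dist_triangle _ _ _
        _ < ε/2 + ε/2 := by
            have := h1; have := h2
            simp only [comp] at h1 h2
            rw [dist_comm L]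
            exact add_lt_add h1 h2
        _ = ε := by ring
  rw [himg.isClosed.closure_eq] at hcl
  obtain ⟨x, _, hx⟩ := hcl
  exact ⟨x, hx⟩

lemma notShifted_aux {X : Type u} [MetricSpace X]
    (hbc : ∀ s : Set X, IsClosed s → Bornology.IsBounded s → IsCompact s)
    (hhom : ∀ x y : X, ∃ f : X → X, IsIsomEmb f ∧ f x = y) :
    ∀ f : X → X, IsIsomEmb f → Surjective f := by
  intro f hf t
  obtain ⟨g, hg, hgt⟩ := hhom (f t) t
  have hgf : IsIsomEmb (g ∘ f) := fun a b => by
    simp only [comp_apply]; rw [hg, hf]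
  have hfix : (g ∘ f) t = t := hgt
  have hs := surj_of_fixed hbc hgf hfix
  obtain ⟨x, hx⟩ := hs (g t)
  exact ⟨x, isomEmb_injective hg hx⟩

lemma isometricTo_symm {X : Type u} {Y : Type v} [MetricSpace X] [MetricSpace Y]
    {f : X → Y} (hf : IsIsomEmb f) (hs : Surjective f) :
    ∃ g : Y → X, IsIsomEmb g ∧ Surjective g := by
  have hb : Bijective f := ⟨isomEmb_injective hf, hs⟩
  let e := Equiv.ofBijective f hb
  refine ⟨e.symm, ?_, e.symm.surjective⟩
  intro a b
  have : dist (f (e.symm a)) (f (e.symm b)) = dist (e.symm a) (e.symm b) := hf _ _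
  rw [show f (e.symm a) = a from e.apply_symm_apply a,
      show f (e.symm b) = b from e.apply_symm_apply b] at this
  exact this.symm

/-- If `X = M i₀` belongs to the family `M`, is boundedly compact, homogeneous and
`M`-universal, then `X` is minimal `M`-universal; moreover every minimal `M`-universal
metric space is isometric to `X`, and every `M`-universal member of `M` is isometric
to `X`. -/
theorem statement7 {ι : Type w} (M : ι → Type u) [∀ i, MetricSpace (M i)] (i₀ : ι)
    (hbc : ∀ s : Set (M i₀), IsClosed s → Bornology.IsBounded s → IsCompact s)
    (hhom : ∀ x y : M i₀, ∃ f : M i₀ → M i₀, IsIsomEmb f ∧ f x = y)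
    (huniv : UnivFor M (M i₀)) :
    MinUnivFor M (M i₀) ∧
    (∀ (Y : Type v) [MetricSpace Y], MinUnivFor M Y → IsIsometricTo Y (M i₀)) ∧
    (∀ j, UnivFor M (M j) → IsIsometricTo (M j) (M i₀)) := by
  have hns : ∀ f : M i₀ → M i₀, IsIsomEmb f → Surjective f := notShifted_aux hbc hhom
  refine ⟨⟨huniv, ?_⟩, ?_, ?_⟩
  · -- minimality
    intro S hS
    obtain ⟨f, hf⟩ := hS i₀
    have hg : IsIsomEmb (fun x => ((f x : M i₀))) := by
      intro a b
      have := hf a b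
      rwa [Subtype.dist_eq] at this
    have hsurj := hns _ hg
    apply eq_univ_of_forall
    intro x
    obtain ⟨a, ha⟩ := hsurj x
    exact ha ▸ (f a).2
  · -- minimal universal spaces are isometric to X
    intro Y _ hY
    obtain ⟨hYu, hYmin⟩ := hY
    obtain ⟨f, hf⟩ := hYu i₀
    have hSu : UnivFor M ↥(range f) := by
      intro i
      obtain ⟨g, hg⟩ := huniv i
      refine ⟨fun a => ⟨f (g a), mem_range_self _⟩, ?_⟩
      intro a b
      rw [Subtype.dist_eq]
      simp only
      rw [hf, hg]
    have hr := hYmin _ hSu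
    have hsurj : Surjective f := by
      intro y
      have : y ∈ range f := hr ▸ mem_univ y
      exact this
    obtain ⟨g, hg, hgs⟩ := isometricTo_symm hf hsurj
    exact ⟨g, hg, hgs⟩
  · -- universal members of the family are isometric to X
    intro j hj
    obtain ⟨f, hf⟩ := hj i₀
    obtain ⟨g, hg⟩ := huniv j
    have hgf : IsIsomEmb (g ∘ f) := fun a b => by
      simp only [comp_apply]; rw [hg, hf]
    have hsurj : Surjective g := by
      intro t
      obtain ⟨x, hx⟩ := hns _ hgf t
      exact ⟨f x, hx⟩
    exact ⟨g, hg, hsurj⟩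
end

section
/- Let X be a complete metric space that is not shifted. Then: (i) if for every surjective self-isometry g of X and every point x ∈ X there is a positive integer m with g^m(x) = x, then every dense subset of X (with the induced metric) is not shifted; (ii) if X contains no isolated points and every dense subset of X (with the induced metric) is not shifted, then for every surjective self-isometry g of X and every x ∈ X there is a positive integer m with g^m(x) = x. -/
universe u v w

open Function Set

/-- Let `X` be a complete not shifted metric space. (i) If every surjective self-isometry
of `X` has all its points periodic, then every dense subset of `X` is not shifted.
(ii) If `X` has no isolated points and every dense subset of `X` is not shifted, then
every surjective self-isometry of `X` has all its points periodic. -/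
theorem statement9 {X : Type u} [MetricSpace X] [CompleteSpace X]
    (hns : NotShifted X) :
    ((∀ g : X → X, IsIsomEmb g → Surjective g →
        ∀ x : X, ∃ m : ℕ, 0 < m ∧ g^[m] x = x) →
      ∀ S : Set X, Dense S → NotShifted ↥S) ∧
    ((∀ x : X, Filter.NeBot (nhdsWithin x {x}ᶜ)) →
      (∀ S : Set X, Dense S → NotShifted ↥S) →
      ∀ g : X → X, IsIsomEmb g → Surjective g →
        ∀ x : X, ∃ m : ℕ, 0 < m ∧ g^[m] x = x) := by
  constructor
  · intro hper S hS f hf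
    -- extend f to X
    have hdr : DenseRange ((↑) : S → X) := hS.denseRange_val
    have hui : IsUniformInducing ((↑) : S → X) :=
      isUniformEmbedding_subtype_val.isUniformInducing
    set F : S → X := fun s => (f s : X) with hF
    have hFisom : Isometry F := by
      apply Isometry.of_dist_eq
      intro a b
      have := hf a b
      simpa [hF, Subtype.dist_eq] using this
    have hFuc : UniformContinuous F := hFisom.uniformContinuous
    set di := hui.isDenseInducing hdr with hdi
    set g : X → X := di.extend F with hg
    have hgc : Continuous g :=
      (uniformContinuous_uniformly_extend hui hdr hFuc).continuous
    have hgeq : ∀ s : S, g ↑s = F s := fun s => di.extend_eq hFisom.continuous s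
    have hgisom : IsIsomEmb g := by
      intro a b
      refine DenseRange.induction_on₂ (p := fun a b => dist (g a) (g b) = dist a b) hdr
        ?_ ?_ a b
      · exact isClosed_eq ((hgc.comp continuous_fst).dist (hgc.comp continuous_snd))
          (continuous_fst.dist continuous_snd)
      · intro a b
        rw [hgeq, hgeq]
        simpa [hF, Subtype.dist_eq] using hf a b
    have hgsurj : Surjective g := hns g hgisom
    -- iterates
    have hiter : ∀ (k : ℕ) (s : S), g^[k] ↑s = ↑(f^[k] s) := by
      intro k
      induction k with
      | zero => intro s; simp
      | succ n ih =>
        intro s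
        rw [Function.iterate_succ_apply, Function.iterate_succ_apply]
        rw [show g ↑s = ↑(f s) from hgeq s]
        exact ih (f s)
    intro y
    obtain ⟨m, hm, hmy⟩ := hper g hgisom hgsurj ↑y
    obtain ⟨k, rfl⟩ := Nat.exists_eq_succ_of_ne_zero hm.ne'
    refine ⟨f^[k] y, ?_⟩
    have : ((f^[k+1] y : S) : X) = ↑y := by rw [← hiter]; exact hmy
    have h2 : f^[k+1] y = y := Subtype.ext this
    conv_rhs => rw [← h2]
    rw [Function.iterate_succ_apply']
  · intro hiso hdense g hg hgsurj x
    by_contra hcon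
    push_neg at hcon
    have hginj : Injective g := by
      intro a b hab
      have h := hg a b
      rw [hab, dist_self] at h
      exact eq_of_dist_eq_zero h.symm
    set e : X ≃ X := Equiv.ofBijective g ⟨hginj, hgsurj⟩ with he
    have hex : ∀ y, e y = g y := fun _ => rfl
    set b : ℕ → X := fun n => e.symm^[n] x with hb
    have hbx : b 0 = x := rfl
    have hbs : ∀ n, b (n+1) = e.symm (b n) := fun n => Function.iterate_succ_apply' _ n x
    have heiter : ∀ (k : ℕ) (z : X), e^[k] z = g^[k] z := by
      intro k
      induction k with
      | zero => intro z; rfl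
      | succ n ih =>
        intro z
        rw [Function.iterate_succ_apply', Function.iterate_succ_apply', ih, hex]
    have hsymm : ∀ (z : X) (n : ℕ), g z = b n → z = b (n+1) := by
      intro z n hzn
      rw [hbs n, ← hzn, ← hex, e.symm_apply_apply]
    have hbne : ∀ n, g x ≠ b n := by
      intro n hgb
      have hx : x = b (n+1) := hsymm x n hgb
      have : g^[n+1] x = x := by
        rw [← heiter]
        conv_lhs => rw [hx, hb]
        exact (Function.LeftInverse.iterate e.apply_symm_apply (n+1)) x
      exact hcon (n+1) (Nat.succ_pos n) this
    set S : Set X := ⋂ n, {b n}ᶜ with hSdef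
    have hSdense : Dense S := by
      apply dense_iInter_of_isOpen
      · intro n; exact isOpen_compl_singleton
      · intro n
        haveI := hiso (b n)
        exact dense_compl_singleton (b n)
    have hmemS : ∀ z, z ∈ S ↔ ∀ n, z ≠ b n := by
      intro z; simp [hSdef]
    have hgS : ∀ z ∈ S, g z ∈ S := by
      intro z hz
      rw [hmemS] at hz ⊢
      intro n hgz
      exact hz (n+1) (hsymm z n hgz)
    have hgxS : g x ∈ S := (hmemS _).mpr hbne
    set f : S → S := fun s => ⟨g ↑s, hgS ↑s s.2⟩ with hfdef
    have hfisom : IsIsomEmb f := by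
      intro a b
      simp only [hfdef, Subtype.dist_eq]
      exact hg a b
    have hfsurj : Surjective f := hdense S hSdense f hfisom
    obtain ⟨⟨s, hs⟩, hfs⟩ := hfsurj ⟨g x, hgxS⟩
    have hgsgx : g s = g x := congrArg Subtype.val hfs
    have hsx : s = x := hginj hgsgx
    have hxS : x ∈ S := hsx ▸ hs
    rw [hmemS] at hxS
    exact hxS 0 hbx.symm
end

section
/- Let n be a positive integer and let E and F be n-dimensional normed vector spaces over ℝ. Then every distance-preserving map f : E → F (i.e. ‖f(x) − f(y)‖ = ‖x − y‖ for all x, y ∈ E) is surjective. -/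
universe u v

open Function

/-- A distance-preserving self-map of a finite-dimensional normed space is surjective. -/
theorem aux_self_surjective {E : Type u} [NormedAddCommGroup E] [NormedSpace ℝ E]
    [FiniteDimensional ℝ E] (g : E → E) (hg : Isometry g) : Surjective g := by
  set h : E → E := fun x => g x - g 0 with hh
  have hiso : Isometry h := by
    intro x y
    simpa [h, edist_eq_enorm_sub, sub_sub_sub_cancel_right] using hg x y
  have h0 : h 0 = 0 := by simp [h]
  have hnorm : ∀ x, ‖h x‖ = ‖x‖ := by
    intro x
    have := hiso.dist_eq x 0
    simpa [h0, dist_eq_norm] using this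
  have hiter_iso : ∀ k : ℕ, Isometry (h^[k]) := by
    intro k
    induction k with
    | zero => simpa using isometry_id
    | succ k ih =>
      rw [Function.iterate_succ]
      exact ih.comp hiso
  have hsurj : Surjective h := by
    intro y
    have hmem : ∀ k : ℕ, h^[k] y ∈ Metric.closedBall (0 : E) ‖y‖ := by
      intro k
      induction k with
      | zero => simp
      | succ k ih =>
        rw [Function.iterate_succ_apply']
        simpa [Metric.mem_closedBall, dist_eq_norm, hnorm] using ih
    have hclosed : IsClosed (Set.range h) := hiso.isClosedEmbedding.isClosed_range
    have hy : y ∈ closure (Set.range h) := by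
      rw [Metric.mem_closure_iff]
      intro ε hε
      obtain ⟨z, -, φ, hφ, hlim⟩ :=
        (isCompact_closedBall (0 : E) ‖y‖).tendsto_subseq hmem
      have hcauchy := hlim.cauchySeq
      rw [Metric.cauchySeq_iff] at hcauchy
      obtain ⟨N, hN⟩ := hcauchy ε hε
      have hlt : φ N < φ (N + 1) := hφ (Nat.lt_succ_self N)
      have hd : dist (h^[φ N] y) (h^[φ (N + 1)] y) < ε := hN N le_rfl (N + 1) (Nat.le_succ N)
      have key : dist y (h^[φ (N + 1) - φ N] y) < ε := by
        have heq : h^[φ (N + 1)] y = h^[φ N] (h^[φ (N + 1) - φ N] y) := by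
          rw [← Function.iterate_add_apply]
          congr 1
          omega
        rw [heq] at hd
        rwa [← (hiter_iso (φ N)).dist_eq y (h^[φ (N + 1) - φ N] y)]
      refine ⟨h^[φ (N + 1) - φ N] y, ?_, key⟩
      obtain ⟨m, hm⟩ := Nat.exists_eq_succ_of_ne_zero (by omega : φ (N + 1) - φ N ≠ 0)
      rw [hm, Function.iterate_succ_apply']
      exact ⟨_, rfl⟩
    rwa [hclosed.closure_eq] at hy
  intro z
  obtain ⟨x, hx⟩ := hsurj (z - g 0)
  refine ⟨x, ?_⟩
  have : g x - g 0 = z - g 0 := hx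
  have := congrArg (· + g 0) this
  simpa using this

/-- Every distance-preserving map between two real normed vector spaces of the same finite
positive dimension `n` is surjective. -/
theorem statement12 (n : ℕ) (hn : 0 < n)
    {E : Type u} {F : Type v} [NormedAddCommGroup E] [NormedSpace ℝ E]
    [NormedAddCommGroup F] [NormedSpace ℝ F]
    [FiniteDimensional ℝ E] [FiniteDimensional ℝ F]
    (hE : Module.finrank ℝ E = n) (hF : Module.finrank ℝ F = n)
    (f : E → F) (hf : ∀ x y : E, ‖f x - f y‖ = ‖x - y‖) :
    Surjective f := by
  classical
  have hiso : Isometry f := Isometry.of_dist_eq fun x y => by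
    simp [dist_eq_norm, hf]
  -- Rademacher: f is differentiable at some point x₀
  borelize E
  set μ : MeasureTheory.Measure E := (Module.finBasis ℝ E).addHaar with hμ
  have hae : ∀ᵐ x ∂μ, DifferentiableAt ℝ f x :=
    hiso.lipschitz.ae_differentiableAt
  have hne : μ ≠ 0 :=
    MeasureTheory.Measure.measure_univ_pos.mp (isOpen_univ.measure_pos μ ⟨0, trivial⟩)
  haveI : MeasureTheory.ae μ |>.NeBot := MeasureTheory.ae_neBot.mpr hne
  obtain ⟨x₀, hx₀⟩ := hae.exists
  -- the derivative is a linear isometric embedding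
  set T : E →L[ℝ] F := fderiv ℝ f x₀ with hT
  have hTnorm : ∀ v : E, ‖T v‖ = ‖v‖ := by
    intro v
    have hd : HasDerivAt (fun t : ℝ => f (x₀ + t • v)) (T v) 0 := by
      have h1 : HasDerivAt (fun t : ℝ => x₀ + t • v) v 0 := by
        simpa using ((hasDerivAt_id (0:ℝ)).smul_const v).const_add x₀
      have h2 : HasFDerivAt f T (x₀ + (0:ℝ) • v) := by
        simpa using hx₀.hasFDerivAt
      have := h2.comp_hasDerivAt 0 h1
      simpa [Function.comp_def] using this
    rw [hasDerivAt_iff_tendsto_slope] at hd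
    have hslope : ∀ t : ℝ, t ≠ 0 →
        ‖slope (fun t : ℝ => f (x₀ + t • v)) 0 t‖ = ‖v‖ := by
      intro t ht
      rw [slope_def_module]
      rw [norm_smul]
      have : f (x₀ + t • v) - f (x₀ + (0:ℝ) • v) = f (x₀ + t • v) - f x₀ := by simp
      rw [this]
      have h3 : ‖f (x₀ + t • v) - f x₀‖ = ‖t • v‖ := by
        rw [hf]
        congr 1
        abel
      rw [h3, norm_smul, sub_zero]
      rw [← mul_assoc]
      simp [Real.norm_eq_abs, abs_inv, inv_mul_cancel₀ (abs_ne_zero.mpr ht)]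
    have hconst : Filter.Tendsto (fun t : ℝ => ‖slope (fun t : ℝ => f (x₀ + t • v)) 0 t‖)
        (nhdsWithin 0 {(0:ℝ)}ᶜ) (nhds ‖v‖) := by
      apply Filter.Tendsto.congr' _ tendsto_const_nhds
      filter_upwards [self_mem_nhdsWithin] with t ht
      exact (hslope t ht).symm
    have hlim2 : Filter.Tendsto (fun t : ℝ => ‖slope (fun t : ℝ => f (x₀ + t • v)) 0 t‖)
        (nhdsWithin 0 {(0:ℝ)}ᶜ) (nhds ‖T v‖) := (continuous_norm.tendsto _).comp hd
    exact tendsto_nhds_unique hlim2 hconst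
  -- T is a linear isometry, hence bijective since finranks agree
  have hTinj : Function.Injective T := by
    intro a b hab
    have : ‖a - b‖ = 0 := by rw [← hTnorm, map_sub, hab, sub_self, norm_zero]
    simpa [sub_eq_zero] using norm_eq_zero.mp this
  have hTsurj : Function.Surjective T :=
    (LinearMap.injective_iff_surjective_of_finrank_eq_finrank
      (by rw [hE, hF]) : Function.Injective (T : E →ₗ[ℝ] F) ↔ _).mp hTinj
  -- build the linear isometry equivalence
  let Tli : E →ₗᵢ[ℝ] F := ⟨(T : E →ₗ[ℝ] F), hTnorm⟩
  let Te : E ≃ₗᵢ[ℝ] F := LinearIsometryEquiv.ofSurjective Tli hTsurj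
  -- the self-map Te.symm ∘ f is a distance-preserving self-map of E, hence surjective
  have hg : Isometry (fun x => Te.symm (f x)) := Te.symm.isometry.comp hiso
  have hgs := aux_self_surjective _ hg
  intro z
  obtain ⟨x, hx⟩ := hgs (Te.symm z)
  refine ⟨x, ?_⟩
  have := congrArg Te hx
  simpa using this
end

section
/- Let 𝔐 = {Y_i : i ∈ I} be a nonempty family of nonempty metric spaces such that every Y_i is not shifted and Y_i does not embed isometrically into Y_j whenever i ≠ j. If there exists ε > 0 such that every Y_i is ε-connected, then there exists a metric space X that is a disjoint union of the Y_i (i.e. X admits a partition {X_i : i ∈ I} into nonempty sets with X_i, carrying the induced metric, isometric to Y_i for every i) and is a minimal 𝔐-universal metric space. -/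
universe u v w

open Function Set

/-- `X` is a disjoint union of the members of the family `M` (it admits a partition into
nonempty pieces, the `i`-th piece being isometric to `M i`) and is minimal `M`-universal. -/
def IsMinUnivDisjointUnion {ι : Type w} (M : ι → Type u) [∀ i, MetricSpace (M i)]
    (X : Type v) [MetricSpace X] : Prop :=
  ∃ P : ι → Set X,
    (∀ i, (P i).Nonempty) ∧
    (∀ i j, i ≠ j → Disjoint (P i) (P j)) ∧
    (⋃ i, P i) = Set.univ ∧
    (∀ i, IsIsometricTo ↥(P i) (M i)) ∧
    MinUnivFor M X

section Aux

variable {ι : Type w} [DecidableEq ι] (M : ι → Type u) [∀ i, MetricSpace (M i)]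

/-- The sigma distance: original distance within a component, and hub distance through
base points `p` plus constant `c` across components. -/
noncomputable def sigDist (p : ∀ i, M i) (c : ℝ) (a b : Σ i, M i) : ℝ :=
  if h : a.1 = b.1 then dist (cast (congrArg M h) a.2) b.2
  else dist a.2 (p a.1) + c + dist (p b.1) b.2

lemma sigDist_same (p : ∀ i, M i) (c : ℝ) (i : ι) (x y : M i) :
    sigDist M p c ⟨i, x⟩ ⟨i, y⟩ = dist x y := by
  simp [sigDist]

lemma sigDist_diff (p : ∀ i, M i) (c : ℝ) {i j : ι} (hij : i ≠ j) (x : M i) (y : M j) :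
    sigDist M p c ⟨i, x⟩ ⟨j, y⟩ = dist x (p i) + c + dist (p j) y := by
  simp [sigDist, hij]

lemma sigDist_comm (p : ∀ i, M i) (c : ℝ) (a b : Σ i, M i) :
    sigDist M p c a b = sigDist M p c b a := by
  obtain ⟨i, x⟩ := a; obtain ⟨j, y⟩ := b
  by_cases h : i = j
  · subst h; rw [sigDist_same, sigDist_same, dist_comm]
  · rw [sigDist_diff M p c h, sigDist_diff M p c (Ne.symm h), dist_comm x, dist_comm y]
    ring

lemma sigDist_self (p : ∀ i, M i) (c : ℝ) (a : Σ i, M i) : sigDist M p c a a = 0 := by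
  obtain ⟨i, x⟩ := a; rw [sigDist_same]; exact dist_self x

lemma sigDist_triangle (p : ∀ i, M i) {c : ℝ} (hc : 0 ≤ c) (a b d : Σ i, M i) :
    sigDist M p c a d ≤ sigDist M p c a b + sigDist M p c b d := by
  obtain ⟨i, x⟩ := a; obtain ⟨j, y⟩ := b; obtain ⟨k, z⟩ := d
  by_cases hij : i = j
  · subst hij
    by_cases hik : i = k
    · subst hik
      rw [sigDist_same, sigDist_same, sigDist_same]
      exact dist_triangle x y z
    · rw [sigDist_same, sigDist_diff M p c hik, sigDist_diff M p c hik]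
      have := dist_triangle x y (p i)
      linarith
  · by_cases hjk : j = k
    · subst hjk
      rw [sigDist_same, sigDist_diff M p c hij, sigDist_diff M p c hij]
      have := dist_triangle (p j) y z
      linarith
    · by_cases hik : i = k
      · subst hik
        rw [sigDist_same, sigDist_diff M p c hij, sigDist_diff M p c hjk]
        have h1 := dist_triangle x (p i) z
        have h2 := dist_nonneg (x := p j) (y := y)
        have h3 := dist_nonneg (x := y) (y := p j)
        linarith
      · rw [sigDist_diff M p c hik, sigDist_diff M p c hij, sigDist_diff M p c hjk]
        have h2 := dist_nonneg (x := p j) (y := y)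
        have h3 := dist_nonneg (x := y) (y := p j)
        linarith

lemma sigDist_eq_zero (p : ∀ i, M i) {c : ℝ} (hc : 0 < c) {a b : Σ i, M i}
    (h : sigDist M p c a b = 0) : a = b := by
  obtain ⟨i, x⟩ := a; obtain ⟨j, y⟩ := b
  by_cases hij : i = j
  · subst hij
    rw [sigDist_same] at h
    exact congrArg _ (dist_eq_zero.mp h)
  · rw [sigDist_diff M p c hij] at h
    have h2 := dist_nonneg (x := x) (y := p i)
    have h3 := dist_nonneg (x := p j) (y := y)
    linarith

/-- The metric space structure on the sigma type. -/
noncomputable def sigMetric (p : ∀ i, M i) (c : ℝ) (hc : 0 < c) :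
    MetricSpace (Σ i, M i) :=
  { dist := sigDist M p c
    dist_self := sigDist_self M p c
    dist_comm := sigDist_comm M p c
    dist_triangle := sigDist_triangle M p hc.le
    eq_of_dist_eq_zero := fun h => sigDist_eq_zero M p hc h
    edist_dist := fun _ _ => rfl }

omit [DecidableEq ι] [∀ i, MetricSpace (M i)] in
lemma sig_eta {j : ι} (a : Σ i, M i) (h : a.1 = j) :
    (⟨j, cast (congrArg M h) a.2⟩ : Σ i, M i) = a := by
  obtain ⟨i, x⟩ := a; subst h; rfl

end Aux

/-- Let `M` be a nonempty family of nonempty metric spaces, each not shifted, no member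
embedding isometrically into another, and all `ε`-connected for a common `ε > 0`. Then
there is a metric space which is a disjoint union of the members of `M` and is a minimal
`M`-universal metric space. -/
theorem statement14 {ι : Type w} [Nonempty ι] (M : ι → Type u)
    [instM : ∀ i, MetricSpace (M i)] [∀ i, Nonempty (M i)]
    (hns : ∀ i, NotShifted (M i))
    (hinc : ∀ i j, i ≠ j → ¬ IsomEmbeds (M i) (M j))
    (ε : ℝ) (hε : 0 < ε)
    (hconn : ∀ i, ∀ x y : M i, ∃ (n : ℕ) (c : Fin (n + 1) → M i),
      c 0 = x ∧ c (Fin.last n) = y ∧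
      ∀ k : Fin n, dist (c k.castSucc) (c k.succ) ≤ ε) :
    ∃ (X : Type (max u w)) (instX : MetricSpace X),
      @IsMinUnivDisjointUnion ι M instM X instX := by
  classical
  letI : DecidableEq ι := Classical.decEq ι
  set p : ∀ i, M i := fun i => Classical.arbitrary (M i) with hp
  have hc : (0 : ℝ) < ε + 1 := by linarith
  refine ⟨Σ i, M i, sigMetric M p (ε + 1) hc, ?_⟩
  letI instX : MetricSpace (Σ i, M i) := sigMetric M p (ε + 1) hc
  have hdist : ∀ a b : Σ i, M i, dist a b = sigDist M p (ε + 1) a b := fun _ _ => rfl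
  -- key: two points at distance ≤ ε are in the same component
  have hsame : ∀ a b : Σ i, M i, dist a b ≤ ε → a.1 = b.1 := by
    intro a b hab
    by_contra hne
    obtain ⟨i, x⟩ := a; obtain ⟨j, y⟩ := b
    rw [hdist, sigDist_diff M p (ε + 1) hne] at hab
    have h2 := dist_nonneg (x := x) (y := p i)
    have h3 := dist_nonneg (x := p j) (y := y)
    linarith
  -- the canonical embeddings
  have hemb : ∀ i, IsIsomEmb (fun x : M i => (⟨i, x⟩ : Σ i, M i)) := by
    intro i x y
    rw [hdist, sigDist_same]
  refine ⟨fun i => Set.range (Sigma.mk i), ?_, ?_, ?_, ?_, ?_, ?_⟩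
  · exact fun i => ⟨⟨i, Classical.arbitrary (M i)⟩, ⟨_, rfl⟩⟩
  · intro i j hij
    rw [Set.disjoint_iff_inter_eq_empty]
    ext a
    simp only [Set.mem_inter_iff, Set.mem_range, Set.mem_empty_iff_false, iff_false]
    rintro ⟨⟨x, rfl⟩, ⟨y, hy⟩⟩
    exact hij (congrArg Sigma.fst hy).symm
  · ext a
    simp only [Set.mem_iUnion, Set.mem_range, Set.mem_univ, iff_true]
    exact ⟨a.1, a.2, Sigma.eta a⟩
  · -- each piece is isometric to M i
    intro i
    have hfst : ∀ s : ↥(Set.range (Sigma.mk i : M i → Σ i, M i)), (s : Σ i, M i).1 = i := by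
      rintro ⟨_, ⟨x, rfl⟩⟩; rfl
    refine ⟨fun s => cast (congrArg M (hfst s)) (s : Σ i, M i).2, ?_, ?_⟩
    · intro s t
      have hs := sig_eta M (s : Σ i, M i) (hfst s)
      have ht := sig_eta M (t : Σ i, M i) (hfst t)
      have hst : dist s t = dist (s : Σ i, M i) (t : Σ i, M i) := rfl
      rw [hst, ← hs, ← ht, hdist, sigDist_same]
    · intro x
      refine ⟨⟨⟨i, x⟩, ⟨x, rfl⟩⟩, ?_⟩
      apply sigma_mk_injective (i := i)
      exact sig_eta M (⟨i, x⟩ : Σ i, M i) rfl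
  · -- universal
    exact fun i => ⟨_, hemb i⟩
  · -- minimal
    intro S hS
    have key : ∀ i, ∀ x : M i, (⟨i, x⟩ : Σ i, M i) ∈ S := by
      intro i
      obtain ⟨g, hg⟩ := hS i
      -- all images of g lie in a single component
      have hcomp : ∀ x y : M i, ((g x : Σ i, M i)).1 = ((g y : Σ i, M i)).1 := by
        intro x y
        obtain ⟨n, ch, h0, hl, hstep⟩ := hconn i x y
        have main : ∀ k : Fin (n + 1), ((g (ch k) : Σ i, M i)).1 = ((g (ch 0) : Σ i, M i)).1 := by
          intro k
          induction k using Fin.induction with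
          | zero => rfl
          | succ k ih =>
            have hd : dist (g (ch k.castSucc)) (g (ch k.succ)) ≤ ε := by
              rw [hg]; exact hstep k
            have : dist ((g (ch k.castSucc) : Σ i, M i)) ((g (ch k.succ) : Σ i, M i)) ≤ ε := by
              rwa [Subtype.dist_eq] at hd
            have := hsame _ _ this
            rw [← this]; exact ih
        have hy := main (Fin.last n)
        rw [hl] at hy
        rw [hy, h0]
      -- name the component
      obtain ⟨j, hcj⟩ : ∃ j, ∀ x : M i, ((g x : Σ i, M i)).1 = j :=
        ⟨((g (Classical.arbitrary (M i)) : Σ i, M i)).1, fun x => hcomp x _⟩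
      -- transported map
      obtain ⟨h, hhe⟩ : ∃ h : M i → M j, ∀ x : M i,
          (⟨j, h x⟩ : Σ i, M i) = (g x : Σ i, M i) :=
        ⟨fun x => cast (congrArg M (hcj x)) ((g x : Σ i, M i)).2, fun x => sig_eta M _ (hcj x)⟩
      have hiso : IsIsomEmb h := by
        intro x y
        have : dist (h x) (h y) = dist (⟨j, h x⟩ : Σ i, M i) ⟨j, h y⟩ := by
          rw [hdist, sigDist_same]
        rw [this, hhe x, hhe y, ← Subtype.dist_eq, hg]
      have hij : i = j := by
        by_contra hne
        exact hinc i j hne ⟨h, hiso⟩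
      subst hij
      -- h is an isometric self-embedding, hence surjective
      have hsurj := hns i h hiso
      intro x
      obtain ⟨y, hy⟩ := hsurj x
      have : (⟨i, x⟩ : Σ i, M i) = (g y : Σ i, M i) := by rw [← hhe y, hy]
      rw [this]
      exact (g y).2
    ext a
    simp only [Set.mem_univ, iff_true]
    have := key a.1 a.2
    rwa [Sigma.eta] at this
end

section
/- The subset X = (−1, 0) ∪ {n : n ∈ ℕ, n ≥ 1} of the real line, with the metric induced from ℝ, is a minimal universal metric space for the class 𝔉₂ of all metric spaces with at most two points; that is, every metric space with at most two points embeds isometrically into X, and no proper subset of X (with the induced metric) has this property. -/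
universe u v

open Function Set

/-- `Y` is universal for the class `𝔉₂` of all metric spaces with at most two points. -/
def F2Universal (Y : Type v) [MetricSpace Y] : Prop :=
  ∀ (A : Type u) [MetricSpace A], Cardinal.mk A ≤ 2 → IsomEmbeds A Y

/-- The subset `(-1, 0) ∪ {1, 2, 3, …}` of the real line. -/
def X15 : Set ℝ := Set.Ioo (-1 : ℝ) 0 ∪ {x : ℝ | ∃ n : ℕ, 1 ≤ n ∧ x = n}

lemma one_mem_X15 : (1:ℝ) ∈ X15 := Or.inr ⟨1, le_refl 1, by norm_num⟩

lemma exists_pair (r : ℝ) (hr : 0 ≤ r) :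
    ∃ p q : ℝ, p ∈ X15 ∧ q ∈ X15 ∧ |p - q| = r := by
  rcases eq_or_lt_of_le hr with h0 | h0
  · exact ⟨1, 1, one_mem_X15, one_mem_X15, by simp [← h0]⟩
  rcases lt_or_ge r 1 with h1 | h1
  · refine ⟨-(1+r)/2, -(1-r)/2, Or.inl ⟨by linarith, by linarith⟩,
      Or.inl ⟨by linarith, by linarith⟩, ?_⟩
    rw [abs_of_nonpos (by linarith)]; ring
  · set n := Nat.floor r with hn
    have hn1 : 1 ≤ n := Nat.le_floor (by exact_mod_cast h1)
    have hle : (n:ℝ) ≤ r := Nat.floor_le hr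
    have hlt : r < n + 1 := Nat.lt_floor_add_one r
    rcases eq_or_lt_of_le hle with he | hlt2
    · refine ⟨1, (n:ℝ)+1, one_mem_X15, Or.inr ⟨n+1, by omega, by push_cast; ring⟩, ?_⟩
      have : (1:ℝ) ≤ n := by exact_mod_cast hn1
      rw [abs_of_nonpos (by linarith)]; linarith
    · refine ⟨(n:ℝ) - r, (n:ℝ), Or.inl ⟨by linarith, by linarith⟩,
        Or.inr ⟨n, hn1, rfl⟩, ?_⟩
      rw [abs_of_nonpos (by linarith)]; ring

lemma ordered_pair {a b : ℝ} (ha : a ∈ X15) (hb : b ∈ X15) {n : ℕ} (hn : 1 ≤ n)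
    {x : ℝ} (hx1 : -1 < x) (hx2 : x < 0) (hab : b - a = n - x) (h : a < b) :
    a = x ∧ b = n := by
  have hn' : (1:ℝ) ≤ n := by exact_mod_cast hn
  rcases ha with ha | ⟨m1, hm1, rfl⟩ <;> rcases hb with hb | ⟨m2, hm2, hb2⟩
  · exfalso; obtain ⟨ha1, ha2⟩ := ha; obtain ⟨hb1, hb2⟩ := hb; linarith
  · subst hb2
    obtain ⟨ha1, ha2⟩ := ha
    have h1 : (n:ℝ) < (m2:ℝ) + 1 := by linarith
    have h2 : (m2:ℝ) < (n:ℝ) + 1 := by linarith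
    have h1' : n < m2 + 1 := by exact_mod_cast h1
    have h2' : m2 < n + 1 := by exact_mod_cast h2
    have : m2 = n := by omega
    subst this
    exact ⟨by linarith, rfl⟩
  · exfalso
    obtain ⟨hb1, hb2⟩ := hb
    have : (1:ℝ) ≤ m1 := by exact_mod_cast hm1
    linarith
  · exfalso
    subst hb2
    have h1 : (m1:ℝ) + n < m2 := by linarith
    have h2 : (m2:ℝ) < (m1:ℝ) + n + 1 := by linarith
    have h1' : m1 + n < m2 := by exact_mod_cast h1
    have h2' : m2 < m1 + n + 1 := by exact_mod_cast h2
    omega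

lemma unique_pair {a b : ℝ} (ha : a ∈ X15) (hb : b ∈ X15) {n : ℕ} (hn : 1 ≤ n)
    {x : ℝ} (hx1 : -1 < x) (hx2 : x < 0) (hab : |a - b| = (n:ℝ) - x) :
    (a = x ∧ b = n) ∨ (b = x ∧ a = n) := by
  have hn' : (1:ℝ) ≤ n := by exact_mod_cast hn
  rcases lt_trichotomy a b with h | h | h
  · left
    refine ordered_pair ha hb hn hx1 hx2 ?_ h
    rw [abs_of_neg (by linarith)] at hab; linarith
  · exfalso; rw [h] at hab; simp at hab; linarith
  · right
    refine ordered_pair hb ha hn hx1 hx2 ?_ h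
    rw [abs_of_pos (by linarith)] at hab; linarith

lemma x15_universal : F2Universal.{u} ↥X15 := by
  classical
  intro A _ hcard
  rcases isEmpty_or_nonempty A with hA | hA
  · exact ⟨fun a => (IsEmpty.false a).elim, fun a => (IsEmpty.false a).elim⟩
  by_cases hsub : ∀ a b : A, a = b
  · refine ⟨fun _ => ⟨1, one_mem_X15⟩, fun a b => ?_⟩
    rw [hsub a b]; simp
  push_neg at hsub
  obtain ⟨a, b, hab⟩ := hsub
  obtain ⟨p, q, hp, hq, hpq⟩ := exists_pair (dist a b) dist_nonneg
  have hall : ∀ c : A, c = a ∨ c = b := by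
    by_contra hc
    push_neg at hc
    obtain ⟨c, hca, hcb⟩ := hc
    have hinj : Function.Injective (fun i : ULift.{u} (Fin 3) => ![a, b, c] i.down) := by
      intro ⟨i⟩ ⟨j⟩ hij
      simp only at hij
      fin_cases i <;> fin_cases j <;> simp_all
    have h3 := Cardinal.mk_le_of_injective hinj
    simp [Cardinal.mk_uLift] at h3
    have : (3:Cardinal) ≤ 2 := h3.trans hcard
    norm_num at this
  refine ⟨fun c => if c = a then ⟨p, hp⟩ else ⟨q, hq⟩, fun c d => ?_⟩
  have key : dist (⟨p, hp⟩ : ↥X15) (⟨q, hq⟩ : ↥X15) = dist a b := by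
    rw [Subtype.dist_eq]; simpa [Real.dist_eq] using hpq
  rcases hall c with rfl | rfl <;> rcases hall d with rfl | rfl <;> dsimp only
  · simp
  · rw [if_pos rfl, if_neg (Ne.symm hab), key]
  · rw [if_neg (Ne.symm hab), if_pos rfl, dist_comm, key, dist_comm]
  · rw [if_neg (Ne.symm hab)]; simp

lemma key_mem {S : Set ↥X15} (hS : F2Universal.{u} ↥S) {n : ℕ} (hn : 1 ≤ n)
    {x : ℝ} (hx1 : -1 < x) (hx2 : x < 0) :
    (∀ h, (⟨x, h⟩ : ↥X15) ∈ S) ∧ (∀ h, (⟨(n:ℝ), h⟩ : ↥X15) ∈ S) := by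
  have hn' : (1:ℝ) ≤ n := by exact_mod_cast hn
  set d : ℝ := (n:ℝ) - x with hd
  obtain ⟨f, hf⟩ := hS (ULift.{u} ↥({0, d} : Set ℝ)) (by
    have h1 : Cardinal.mk ↥({0, d} : Set ℝ) ≤ 2 := by
      have := Cardinal.mk_insert_le (s := ({d} : Set ℝ)) (a := (0:ℝ))
      rw [Cardinal.mk_singleton] at this
      norm_num at this ⊢
      convert this using 2
    rw [Cardinal.mk_uLift, ← Cardinal.lift_two.{u, 0}]
    exact Cardinal.lift_le.mpr h1)
  set u1 := f ⟨⟨0, Or.inl rfl⟩⟩ with hu1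
  set u2 := f ⟨⟨d, Or.inr rfl⟩⟩ with hu2
  have hdist : dist u1 u2 = d := by
    rw [hf]
    show dist ((0:ℝ)) d = d
    rw [Real.dist_eq, abs_of_nonpos (by linarith)]
    ring
  have hval : |((u1 : ↥X15) : ℝ) - ((u2 : ↥X15) : ℝ)| = (n:ℝ) - x := by
    have : dist u1 u2 = |((u1 : ↥X15) : ℝ) - ((u2 : ↥X15) : ℝ)| := by
      rw [Subtype.dist_eq, Subtype.dist_eq, Real.dist_eq]
    rw [← this, hdist]
  have := unique_pair (u1 : ↥X15).2 (u2 : ↥X15).2 hn hx1 hx2 hval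
  constructor
  · intro h
    rcases this with ⟨h1, _⟩ | ⟨h1, _⟩
    · have : (⟨x, h⟩ : ↥X15) = (u1 : ↥X15) := Subtype.ext h1.symm
      rw [this]; exact u1.2
    · have : (⟨x, h⟩ : ↥X15) = (u2 : ↥X15) := Subtype.ext h1.symm
      rw [this]; exact u2.2
  · intro h
    rcases this with ⟨_, h2⟩ | ⟨_, h2⟩
    · have : (⟨(n:ℝ), h⟩ : ↥X15) = (u2 : ↥X15) := Subtype.ext h2.symm
      rw [this]; exact u2.2
    · have : (⟨(n:ℝ), h⟩ : ↥X15) = (u1 : ↥X15) := Subtype.ext h2.symm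
      rw [this]; exact u1.2

/-- The set `(-1, 0) ∪ {1, 2, 3, …}` with the metric induced from `ℝ` is a minimal
universal metric space for the class of all metric spaces with at most two points. -/
theorem statement15 :
    F2Universal ↥X15 ∧ ∀ S : Set ↥X15, F2Universal ↥S → S = Set.univ := by
  refine ⟨x15_universal, ?_⟩
  intro S hS
  ext ⟨p, hp⟩
  simp only [Set.mem_univ, iff_true]
  rcases hp with hp' | ⟨n, hn, rfl⟩
  · exact (key_mem hS (le_refl 1) hp'.1 hp'.2).1 _
  · exact (key_mem hS hn (by norm_num : (-1:ℝ) < -(1/2)) (by norm_num)).2 _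
end

section
/- Let 𝔐 be the family of all closed intervals [a, b] ⊆ ℝ with b − a < 1, each carrying the metric induced from ℝ, and let I be the open interval (0, 1) ⊆ ℝ with the induced metric. Then I is a minimal 𝔐-universal metric space, and every minimal 𝔐-universal metric space is isometric to I. -/
universe u v w

open Function Set

/-- Index of the family of all closed intervals `[a, b] ⊆ ℝ` with `a ≤ b` and `b - a < 1`. -/
def Idx17 : Type := {p : ℝ × ℝ // p.1 ≤ p.2 ∧ p.2 - p.1 < 1}

/-- The family of all closed intervals `[a, b] ⊆ ℝ` with `b - a < 1`, each carrying the
metric induced from `ℝ`. -/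
abbrev M17 (p : Idx17) : Type := ↥(Set.Icc p.val.1 p.val.2)

/-! ### Auxiliary lemmas -/

/-- Rigidity: an isometric embedding of a real interval `[0, L]` into `ℝ` is affine with
slope `±1`. -/
lemma rigid17 {L : ℝ} (hL : 0 ≤ L) (F : ↥(Icc (0:ℝ) L) → ℝ)
    (hF : ∀ a b, dist (F a) (F b) = dist a b) :
    ∃ e c : ℝ, (e = 1 ∨ e = -1) ∧ ∀ u, F u = e * u.val + c := by
  have hd : ∀ a b : ↥(Icc (0:ℝ) L), |F a - F b| = |a.val - b.val| := by
    intro a b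
    have := hF a b
    rwa [Real.dist_eq, Subtype.dist_eq, Real.dist_eq] at this
  have h0 : (0:ℝ) ∈ Icc (0:ℝ) L := ⟨le_refl _, hL⟩
  have hLm : L ∈ Icc (0:ℝ) L := ⟨hL, le_refl _⟩
  set z := F ⟨0, h0⟩ with hz
  have hsq : ∀ a b : ↥(Icc (0:ℝ) L), (F a - F b)^2 = (a.val - b.val)^2 := by
    intro a b
    have := hd a b
    nlinarith [this, abs_nonneg (F a - F b), sq_abs (F a - F b), sq_abs (a.val - b.val)]
  have hprod : ∀ a b : ↥(Icc (0:ℝ) L),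
      (F a - z) * (F b - z) = a.val * b.val := by
    intro a b
    have h1 := hsq a ⟨0, h0⟩
    have h2 := hsq b ⟨0, h0⟩
    have h3 := hsq a b
    simp only [← hz] at h1 h2
    nlinarith [h1, h2, h3]
  rcases eq_or_lt_of_le hL with hL0 | hL0
  · refine ⟨1, z, Or.inl rfl, fun u => ?_⟩
    have hu : u.val = 0 := le_antisymm (hL0 ▸ u.2.2) u.2.1
    have : u = ⟨0, h0⟩ := Subtype.ext hu
    rw [this]; simp [← hz]
  · set w := F ⟨L, hLm⟩ - z with hw
    have hww : w * w = L * L := by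
      have := hprod ⟨L, hLm⟩ ⟨L, hLm⟩; simpa [← hw] using this
    have hcase : w = L ∨ w = -L := by
      rcases mul_self_eq_mul_self_iff.mp hww with h | h
      · exact Or.inl h
      · exact Or.inr h
    rcases hcase with h | h
    · refine ⟨1, z, Or.inl rfl, fun u => ?_⟩
      have := hprod u ⟨L, hLm⟩
      rw [← hw, h] at this
      have : F u - z = u.val := by
        exact mul_right_cancel₀ (ne_of_gt hL0) this
      linarith [this]
    · refine ⟨-1, z, Or.inr rfl, fun u => ?_⟩
      have := hprod u ⟨L, hLm⟩
      rw [← hw, h] at this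
      have : F u - z = -u.val := by
        have h2 : (F u - z) * L = -(u.val * L) := by linarith [this]
        have := mul_right_cancel₀ (ne_of_gt hL0) (by linarith [h2] : (F u - z) * L = (-u.val) * L)
        linarith [this]
      linarith [this]

/-- The range of an isometric embedding of `[0, L]` into `ℝ` contains a closed interval of
length `L`. -/
lemma range_interval17 {L : ℝ} (hL : 0 ≤ L) (F : ↥(Icc (0:ℝ) L) → ℝ)
    (hF : ∀ a b, dist (F a) (F b) = dist a b) :
    ∃ c : ℝ, Icc c (c + L) ⊆ range F := by
  obtain ⟨e, c, he, hFe⟩ := rigid17 hL F hF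
  rcases he with he | he
  · subst he
    refine ⟨c, fun y hy => ?_⟩
    refine ⟨⟨y - c, ⟨by linarith [hy.1], by linarith [hy.2]⟩⟩, ?_⟩
    rw [hFe]; ring
  · subst he
    refine ⟨c - L, fun y hy => ?_⟩
    refine ⟨⟨c - y, ⟨by linarith [hy.2, hy.1], by linarith [hy.1]⟩⟩, ?_⟩
    rw [hFe]; simp

/-- Any open unit interval `(a, a+1)` is universal for the family `M17`. -/
lemma univIoo17 (a : ℝ) : UnivFor M17 ↥(Ioo a (a + 1)) := by
  rintro ⟨⟨p1, p2⟩, hp1, hp2⟩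
  set c := a + (1 - (p2 - p1)) / 2 with hc
  refine ⟨fun u => ⟨u.val - p1 + c, ?_, ?_⟩, ?_⟩
  · have := u.2.1; simp only [hc]; simp at this ⊢; linarith
  · have := u.2.2; simp only [hc]; simp at this ⊢; linarith
  · intro u v
    simp only [Subtype.dist_eq, Real.dist_eq]
    congr 1; ring

/-- From universality extract a segment of any length `L ∈ [0, 1)`. -/
lemma seg_of_univ17 {X : Type u} [MetricSpace X] (h : UnivFor M17 X) {L : ℝ}
    (h0 : 0 ≤ L) (h1 : L < 1) :
    ∃ g : ↥(Icc (0:ℝ) L) → X, ∀ u v, dist (g u) (g v) = dist u v := by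
  obtain ⟨f, hf⟩ := h ⟨((0:ℝ), L), ⟨h0, by simpa using h1⟩⟩
  exact ⟨f, hf⟩

/-- Every point of a minimal `M17`-universal space lies in the range of every sufficiently
long isometric segment. -/
lemma unavoidable17 {X : Type u} [MetricSpace X] (h : MinUnivFor M17 X) (x : X) :
    ∃ ℓ : ℝ, 0 ≤ ℓ ∧ ℓ < 1 ∧ ∀ L : ℝ, ℓ ≤ L → L < 1 →
      ∀ g : ↥(Icc (0:ℝ) L) → X, (∀ u v, dist (g u) (g v) = dist u v) → x ∈ range g := by
  by_contra hcon
  push_neg at hcon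
  have huniv : UnivFor M17 ↥({x}ᶜ : Set X) := by
    rintro ⟨⟨p1, p2⟩, hp1, hp2⟩
    set ℓ := p2 - p1 with hℓ
    have h0 : 0 ≤ ℓ := by linarith
    obtain ⟨L, hℓL, hL1, g, hg, hx⟩ := hcon ℓ h0 (by linarith)
    refine ⟨fun u => ⟨g ⟨u.val - p1, ⟨by linarith [u.2.1], by linarith [u.2.2]⟩⟩, ?_⟩, ?_⟩
    · intro hmem
      exact hx ⟨_, mem_singleton_iff.mp hmem⟩
    · intro u v
      rw [Subtype.dist_eq, hg, Subtype.dist_eq, Subtype.dist_eq, Real.dist_eq, Real.dist_eq]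
      congr 1; ring
  have := h.2 _ huniv
  have hx : x ∈ ({x}ᶜ : Set X) := this ▸ mem_univ x
  exact hx rfl

/-- `(0,1)` is a minimal universal space for `M17`. -/
lemma part1_17 : MinUnivFor M17 ↥(Ioo (0:ℝ) 1) := by
  constructor
  · have := univIoo17 0
    rwa [zero_add] at this
  · intro S hS
    ext t
    simp only [mem_univ, iff_true]
    obtain ⟨t, ht0, ht1⟩ := t
    set L := max t (1 - t) with hLdef
    have htL : t ≤ L := le_max_left _ _
    have htL' : 1 - t ≤ L := le_max_right _ _
    have hL0 : 0 ≤ L := le_trans (le_of_lt ht0) htL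
    have hL1 : L < 1 := max_lt ht1 (by linarith)
    obtain ⟨f, hf⟩ := hS ⟨((0:ℝ), L), ⟨hL0, by simpa using hL1⟩⟩
    set F : ↥(Icc (0:ℝ) L) → ℝ := fun u => ((f u : ↥(Ioo (0:ℝ) 1)) : ℝ) with hFdef
    have hFiso : ∀ u v, dist (F u) (F v) = dist u v := by
      intro u v
      rw [← hf u v, Subtype.dist_eq, Subtype.dist_eq]
    have hmemF : ∀ u, F u ∈ Ioo (0:ℝ) 1 := fun u => (f u : ↥(Ioo (0:ℝ) 1)).2
    obtain ⟨e, c, he, hFe⟩ := rigid17 hL0 F hFiso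
    have hc0 := hmemF ⟨0, ⟨le_refl _, hL0⟩⟩
    have hcL := hmemF ⟨L, ⟨hL0, le_refl _⟩⟩
    rw [hFe] at hc0 hcL
    simp only at hc0 hcL
    rcases he with he | he
    · subst he
      simp only [one_mul] at hc0 hcL
      have hu : t - c ∈ Icc (0:ℝ) L :=
        ⟨by linarith [hc0.1, hcL.2], by linarith [hc0.1, hcL.2]⟩
      have hval : F ⟨t - c, hu⟩ = t := by rw [hFe]; ring
      have : ((f ⟨t - c, hu⟩ : ↥(Ioo (0:ℝ) 1)) : ℝ) = t := hval
      have heq : (f ⟨t - c, hu⟩ : ↥(Ioo (0:ℝ) 1)) = ⟨t, ht0, ht1⟩ := Subtype.ext this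
      rw [← heq]
      exact (f ⟨t - c, hu⟩).2
    · subst he
      have hc0' : 0 < c ∧ c < 1 := by constructor <;> [nlinarith [hc0.1]; nlinarith [hc0.2]]
      have hcL' : L < c ∧ c - L < 1 := by constructor <;> nlinarith [hcL.1, hcL.2]
      have hu : c - t ∈ Icc (0:ℝ) L :=
        ⟨by linarith [hcL'.1], by linarith [hc0'.2]⟩
      have hval : F ⟨c - t, hu⟩ = t := by rw [hFe]; ring
      have heq : (f ⟨c - t, hu⟩ : ↥(Ioo (0:ℝ) 1)) = ⟨t, ht0, ht1⟩ := Subtype.ext hval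
      rw [← heq]
      exact (f ⟨c - t, hu⟩).2

/-- Any minimal `M17`-universal space is isometric to `(0,1)`. -/
lemma part2_17 (X : Type u) [MetricSpace X] (h : MinUnivFor M17 X) :
    IsIsometricTo X ↥(Ioo (0:ℝ) 1) := by
  obtain ⟨hU, hMin⟩ := h
  -- two base points at distance 1/2
  obtain ⟨g2, hg2⟩ := seg_of_univ17 hU (by norm_num : (0:ℝ) ≤ 1/2) (by norm_num)
  set x0 := g2 ⟨0, ⟨le_refl _, by norm_num⟩⟩ with hx0
  set x1 := g2 ⟨1/2, ⟨by norm_num, le_refl _⟩⟩ with hx1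
  have hd01 : dist x0 x1 = 1/2 := by
    rw [hx0, hx1, hg2, Subtype.dist_eq, Real.dist_eq]; norm_num
  set φ : X → ℝ := fun x => dist x x0 ^ 2 - dist x x1 ^ 2 with hφ
  -- unavoidability data
  have hun := fun x => unavoidable17 ⟨hU, hMin⟩ x
  choose ℓ hℓ0 hℓ1 hℓ using hun
  -- φ is an isometric embedding
  have hφiso : ∀ x y : X, dist (φ x) (φ y) = dist x y := by
    intro x y
    set L := max (max (ℓ x) (ℓ y)) (max (ℓ x0) (ℓ x1)) with hLdef
    have hL0 : 0 ≤ L := le_trans (hℓ0 x) (le_trans (le_max_left _ _) (le_max_left _ _))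
    have hL1 : L < 1 := max_lt (max_lt (hℓ1 x) (hℓ1 y)) (max_lt (hℓ1 x0) (hℓ1 x1))
    obtain ⟨g, hg⟩ := seg_of_univ17 hU hL0 hL1
    obtain ⟨s, hs⟩ := hℓ x L (le_trans (le_max_left _ _) (le_max_left _ _)) hL1 g hg
    obtain ⟨t, htt⟩ := hℓ y L (le_trans (le_max_right _ _) (le_max_left _ _)) hL1 g hg
    obtain ⟨s0, hs0⟩ := hℓ x0 L (le_trans (le_max_left _ _) (le_max_right _ _)) hL1 g hg
    obtain ⟨s1, hs1⟩ := hℓ x1 L (le_trans (le_max_right _ _) (le_max_right _ _)) hL1 g hg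
    have hdist : ∀ (a b : ↥(Icc (0:ℝ) L)), dist (g a) (g b) = |a.val - b.val| := by
      intro a b; rw [hg, Subtype.dist_eq, Real.dist_eq]
    have h12 : |s0.val - s1.val| = 1/2 := by
      have := hdist s0 s1
      rw [hs0, hs1, hd01] at this
      exact this.symm
    simp only [hφ]
    rw [← hs, ← htt, ← hs0, ← hs1]
    rw [Real.dist_eq, hdist s s0, hdist s s1, hdist t s0, hdist t s1, hdist s t]
    simp only [sq_abs]
    have key : (s.val - s0.val)^2 - (s.val - s1.val)^2 -
        ((t.val - s0.val)^2 - (t.val - s1.val)^2)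
        = (s.val - t.val) * (2 * (s1.val - s0.val)) := by ring
    rw [key, abs_mul]
    have h2 : |2 * (s1.val - s0.val)| = 1 := by
      rw [abs_mul, abs_two, abs_sub_comm, h12]; norm_num
    rw [h2, mul_one]
  -- the range of φ
  have hIcc : ∀ L : ℝ, 0 ≤ L → L < 1 → ∃ c : ℝ, Icc c (c + L) ⊆ range φ := by
    intro L h0 h1
    obtain ⟨g, hg⟩ := seg_of_univ17 hU h0 h1
    obtain ⟨c, hc⟩ := range_interval17 h0 (fun u => φ (g u))
      (fun u v => by rw [hφiso, hg])
    refine ⟨c, fun y hy => ?_⟩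
    obtain ⟨u, hu⟩ := hc hy
    exact ⟨g u, hu⟩
  have hmemI : ∀ (x : X) (c L : ℝ), ℓ x ≤ L → L < 1 → Icc c (c + L) ⊆ range φ →
      φ x ∈ Icc c (c + L) := by
    intro x c L hxL hL1 hsub
    have hch : ∀ u : ↥(Icc (0:ℝ) L), ∃ z : X, φ z = c + u.val := by
      intro u
      exact hsub ⟨by linarith [u.2.1], by linarith [u.2.2]⟩
    choose w hw using hch
    have hwiso : ∀ u v, dist (w u) (w v) = dist u v := by
      intro u v
      rw [← hφiso, hw, hw, Real.dist_eq, Subtype.dist_eq, Real.dist_eq]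
      congr 1; ring
    obtain ⟨u, hu⟩ := hℓ x L hxL hL1 w hwiso
    rw [← hu, hw]
    exact ⟨by linarith [u.2.1], by linarith [u.2.2]⟩
  -- the infimum of left endpoints of long intervals in the range
  set A := {c : ℝ | ∃ L, ℓ x0 ≤ L ∧ L < 1 ∧ Icc c (c + L) ⊆ range φ} with hA
  have hAne : A.Nonempty := by
    obtain ⟨c, hc⟩ := hIcc (ℓ x0) (hℓ0 x0) (hℓ1 x0)
    exact ⟨c, ℓ x0, le_refl _, hℓ1 x0, hc⟩
  have hAbd : BddBelow A := by
    refine ⟨φ x0 - 1, fun c hc => ?_⟩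
    obtain ⟨L, hL1, hL2, hsub⟩ := hc
    have hm := hmemI x0 c L hL1 hL2 hsub
    have := hm.2
    linarith [hm.1, hm.2]
  set a := sInf A with ha
  have hIoosub : Ioo a (a + 1) ⊆ range φ := by
    rintro t ⟨ht1, ht2⟩
    obtain ⟨c, hcA, hct⟩ := exists_lt_of_csInf_lt hAne (by rw [← ha]; exact ht1)
    obtain ⟨L, hLl, hL1, hsub⟩ := hcA
    have hy0I := hmemI x0 c L hLl hL1 hsub
    by_cases hcase : t ≤ c + L
    · exact hsub ⟨le_of_lt hct, hcase⟩
    · push_neg at hcase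
      set L' := max (ℓ x0) ((t - a + 1)/2) with hL'
      have hL'1 : L' < 1 := max_lt (hℓ1 x0) (by linarith)
      have hL'0 : 0 ≤ L' := le_trans (hℓ0 x0) (le_max_left _ _)
      obtain ⟨c', hc'⟩ := hIcc L' hL'0 hL'1
      have hc'A : c' ∈ A := ⟨L', le_max_left _ _, hL'1, hc'⟩
      have hac' : a ≤ c' := by rw [ha]; exact csInf_le hAbd hc'A
      have hy0I' := hmemI x0 c' L' (le_max_left _ _) hL'1 hc'
      refine hc' ⟨?_, ?_⟩
      · linarith [hy0I'.1, hy0I.2]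
      · have hmax : (t - a + 1)/2 ≤ L' := le_max_right _ _
        linarith
  -- minimality forces the range of φ to lie in (a, a+1)
  have hSuniv : UnivFor M17 ↥({z : X | φ z ∈ Ioo a (a + 1)}) := by
    intro p
    obtain ⟨f, hf⟩ := univIoo17 a p
    have hch : ∀ u : M17 p, ∃ z : X, φ z = ((f u : ↥(Ioo a (a+1))) : ℝ) :=
      fun u => hIoosub (f u : ↥(Ioo a (a+1))).2
    choose w hw using hch
    refine ⟨fun u => ⟨w u, by rw [mem_setOf_eq, hw]; exact (f u : ↥(Ioo a (a+1))).2⟩, ?_⟩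
    intro u v
    rw [Subtype.dist_eq]
    calc dist (w u) (w v) = dist (φ (w u)) (φ (w v)) := (hφiso _ _).symm
      _ = dist ((f u : ↥(Ioo a (a+1))) : ℝ) ((f v : ↥(Ioo a (a+1))) : ℝ) := by rw [hw, hw]
      _ = dist (f u) (f v) := (Subtype.dist_eq _ _).symm
      _ = dist u v := hf u v
  have hall := hMin _ hSuniv
  have hmemIoo : ∀ z : X, φ z ∈ Ioo a (a + 1) := by
    intro z
    have : z ∈ {z : X | φ z ∈ Ioo a (a + 1)} := hall ▸ mem_univ z
    exact this
  -- final isometry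
  refine ⟨fun z => ⟨φ z - a, ?_, ?_⟩, ?_, ?_⟩
  · have := (hmemIoo z).1; linarith
  · have := (hmemIoo z).2; linarith
  · intro z z'
    rw [Subtype.dist_eq]
    simp only
    rw [← hφiso z z', Real.dist_eq, Real.dist_eq]
    congr 1; ring
  · rintro ⟨t, ht1, ht2⟩
    obtain ⟨z, hz⟩ := hIoosub (⟨by linarith, by linarith⟩ : t + a ∈ Ioo a (a + 1))
    refine ⟨z, Subtype.ext ?_⟩
    show φ z - a = t
    rw [hz]; ring

/-- The open interval `(0, 1)` is a minimal universal metric space for the family of all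
closed intervals of length `< 1`, and every minimal universal metric space for this family
is isometric to `(0, 1)`. -/
theorem statement17 :
    MinUnivFor M17 ↥(Set.Ioo (0 : ℝ) 1) ∧
    ∀ (X : Type u) [MetricSpace X],
      MinUnivFor M17 X → IsIsometricTo X ↥(Set.Ioo (0 : ℝ) 1) := by
  exact ⟨part1_17, fun X _ h => part2_17 X h⟩
end

section
/- Let X ⊆ ℝ² be the union of three rays emanating from a common point o such that each pair of the rays makes the angle 2π/3, with the metric on X induced by the Euclidean metric of ℝ². Then X is a minimal universal metric space for the class 𝔉₃ of all metric spaces with at most three points: every metric space with at most three points embeds isometrically into X, and no proper subset of X (with the induced metric) has this property. -/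
universe u v

open Function Set

/-- `Y` is universal for the class `𝔉₃` of all metric spaces with at most three points. -/
def F3Universal (Y : Type v) [MetricSpace Y] : Prop :=
  ∀ (A : Type u) [MetricSpace A], Cardinal.mk A ≤ 3 → IsomEmbeds A Y

/-- The ray emanating from `o` in the direction of the vector `u` in the Euclidean plane. -/
def Ray (o u : EuclideanSpace ℝ (Fin 2)) : Set (EuclideanSpace ℝ (Fin 2)) :=
  {p | ∃ t : ℝ, 0 ≤ t ∧ p = o + t • u}

noncomputable def dd (j k : Fin 3) (t s : ℝ) : ℝ :=
  if j = k then |t - s| else Real.sqrt (t^2 + s^2 + t*s)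

lemma dd_symm (j k : Fin 3) (t s : ℝ) : dd j k t s = dd k j s t := by
  unfold dd
  rcases eq_or_ne j k with h | h
  · simp [h, abs_sub_comm]
  · rw [if_neg h, if_neg (Ne.symm h)]; ring_nf

lemma Qnn {t s : ℝ} (ht : 0 ≤ t) (hs : 0 ≤ s) : 0 ≤ t^2 + s^2 + t*s := by nlinarith

lemma sqrt_eq_imp {Q e : ℝ} (hQ : 0 ≤ Q) (h : Real.sqrt Q = e) : Q = e^2 := by
  rw [← h, Real.sq_sqrt hQ]

lemma dd_eq_sq {j k : Fin 3} (h : j ≠ k) {t s e : ℝ} (ht : 0 ≤ t) (hs : 0 ≤ s)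
    (hd : dd j k t s = e) : t^2 + s^2 + t*s = e^2 := by
  rw [dd, if_neg h] at hd
  exact sqrt_eq_imp (Qnn ht hs) hd

lemma sq_dd_eq {j k : Fin 3} (h : j ≠ k) {t s e : ℝ} (he : 0 ≤ e)
    (hd : t^2 + s^2 + t*s = e^2) : dd j k t s = e := by
  rw [dd, if_neg h, hd, Real.sqrt_sq he]

noncomputable def pfun (a t : ℝ) : ℝ := (Real.sqrt (4*a^2 - 3*t^2) - t)/2

@[fun_prop]
lemma pfun_cont (a : ℝ) : Continuous (pfun a) := by
  unfold pfun; fun_prop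

lemma pfun_sq (a t : ℝ) (h : 0 ≤ 4*a^2 - 3*t^2) :
    t^2 + (pfun a t)^2 + t*(pfun a t) = a^2 := by
  unfold pfun
  have := Real.sq_sqrt h
  linear_combination this/4

lemma pfun_zero (a : ℝ) (h : 0 ≤ a) : pfun a 0 = a := by
  unfold pfun
  rw [show (4*a^2 - 3*(0:ℝ)^2) = (2*a)^2 by ring, Real.sqrt_sq (by linarith)]
  ring

lemma pfun_self (a : ℝ) (h : 0 ≤ a) : pfun a a = 0 := by
  unfold pfun
  rw [show (4*a^2 - 3*a^2) = a^2 by ring, Real.sqrt_sq h]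
  ring

lemma pfun_nonneg (a t : ℝ) (ht : 0 ≤ t) (hta : t ≤ a) : 0 ≤ pfun a t := by
  unfold pfun
  have : t ≤ Real.sqrt (4*a^2 - 3*t^2) := by
    apply (Real.le_sqrt ht (by nlinarith)).mpr
    nlinarith
  linarith

/-- Construction for triangles with the angle at vertex 1 at least `2π/3`. -/
lemma C1 (α β γ : ℝ) (hα : 0 ≤ α) (hβ : 0 ≤ β) (hγ : 0 ≤ γ)
    (h1 : γ ≤ α + β) (h2 : α ≤ β + γ) (h3 : β ≤ α + γ)
    (hbig : α^2 + α*β + β^2 ≤ γ^2) :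
    ∃ t1 t2 t3 : ℝ, 0 ≤ t1 ∧ 0 ≤ t2 ∧ 0 ≤ t3 ∧
      |t2 - t1| = α ∧ t1^2 + t3^2 + t1*t3 = β^2 ∧ t2^2 + t3^2 + t2*t3 = γ^2 := by
  rcases eq_or_lt_of_le hα with hα0 | hα0
  · subst hα0
    have hβγ : β = γ := le_antisymm (by linarith) (by linarith)
    refine ⟨0, 0, β, le_refl 0, le_refl 0, hβ, by norm_num, by ring, by rw [hβγ]; ring⟩
  · set m : ℝ := (γ^2 - α^2 - β^2)/α with hm
    have hma : m * α = γ^2 - α^2 - β^2 := by rw [hm]; field_simp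
    have hmb : β ≤ m := by rw [hm, le_div_iff₀ hα0]; nlinarith
    have hm0 : 0 ≤ m := le_trans hβ hmb
    have e1 : γ^2 - α^2 - β^2 ≤ 2*(α*β) := by nlinarith [mul_self_le_mul_self hγ h1]
    have e2 : -(2*(α*β)) ≤ γ^2 - α^2 - β^2 := by
      nlinarith [mul_nonneg (by linarith : (0:ℝ) ≤ γ + α - β) (by linarith : (0:ℝ) ≤ γ - α + β)]
    have h4 : m^2 ≤ 4*β^2 := by
      have h4' : (m*α)^2 ≤ (2*(α*β))^2 := sq_le_sq' (by linarith) (by linarith)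
      have h4'' : m^2 * α^2 ≤ (2*β)^2 * α^2 := by nlinarith [h4']
      have := le_of_mul_le_mul_right h4'' (pow_pos hα0 2)
      linarith
    have hdisc : 0 ≤ 12*β^2 - 3*m^2 := by linarith
    set s : ℝ := Real.sqrt (12*β^2 - 3*m^2) with hs
    have hs0 : 0 ≤ s := Real.sqrt_nonneg _
    have hs2 : s^2 = 12*β^2 - 3*m^2 := Real.sq_sqrt hdisc
    have hsm : s ≤ 3*m := by
      rw [hs, show 3*m = Real.sqrt ((3*m)^2) by rw [Real.sqrt_sq (by linarith)]]
      apply Real.sqrt_le_sqrt; nlinarith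
    refine ⟨m/2 - s/6, m/2 - s/6 + α, s/3, by linarith, by linarith, by linarith, ?_, ?_, ?_⟩
    · rw [show m/2 - s/6 + α - (m/2 - s/6) = α by ring, abs_of_nonneg hα]
    · linear_combination hs2/12
    · linear_combination hs2/12 + hma

/-- IVT construction for triangles with all angles less than `2π/3`: three distinct rays. -/
lemma C4 (α β γ : ℝ) (hβ : 0 ≤ β) (hγ : 0 ≤ γ) (hβα : β ≤ α)
    (h : γ^2 ≤ α^2 + α*β + β^2) (h' : α^2 ≤ β^2 + β*γ + γ^2) :
    ∃ t1 t2 t3 : ℝ, 0 ≤ t1 ∧ 0 ≤ t2 ∧ 0 ≤ t3 ∧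
      t1^2 + t2^2 + t1*t2 = α^2 ∧ t1^2 + t3^2 + t1*t3 = β^2 ∧ t2^2 + t3^2 + t2*t3 = γ^2 := by
  have hα : 0 ≤ α := le_trans hβ hβα
  have hIVT : ∃ t ∈ Set.Icc (0:ℝ) β,
      (fun t => (pfun α t)^2 + (pfun β t)^2 + (pfun α t)*(pfun β t)) t = γ^2 := by
    apply intermediate_value_Icc' hβ (by fun_prop : Continuous fun t =>
      (pfun α t)^2 + (pfun β t)^2 + (pfun α t)*(pfun β t)).continuousOn
    rw [Set.mem_Icc]
    constructor
    · show (pfun α β)^2 + (pfun β β)^2 + (pfun α β)*(pfun β β) ≤ γ^2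
      rw [pfun_self β hβ]
      have hpβγ : pfun α β ≤ γ := by
        unfold pfun
        have : Real.sqrt (4*α^2 - 3*β^2) ≤ 2*γ + β := by
          rw [show (2*γ + β) = Real.sqrt ((2*γ+β)^2) by rw [Real.sqrt_sq (by linarith)]]
          apply Real.sqrt_le_sqrt; nlinarith
        linarith
      have hpβ0 : 0 ≤ pfun α β := pfun_nonneg α β hβ hβα
      nlinarith
    · show γ^2 ≤ (pfun α 0)^2 + (pfun β 0)^2 + (pfun α 0)*(pfun β 0)
      rw [pfun_zero α hα, pfun_zero β hβ]
      nlinarith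
  obtain ⟨t, ⟨ht0, htβ⟩, hgt⟩ := hIVT
  replace hgt : (pfun α t)^2 + (pfun β t)^2 + (pfun α t)*(pfun β t) = γ^2 := hgt
  have htα : t ≤ α := le_trans htβ hβα
  refine ⟨t, pfun α t, pfun β t, ht0, pfun_nonneg α t ht0 htα, pfun_nonneg β t ht0 htβ, ?_, ?_, ?_⟩
  · exact pfun_sq α t (by nlinarith)
  · exact pfun_sq β t (by nlinarith)
  · exact hgt

/-- Any admissible triple of distances is realized on the abstract tripod. -/
lemma key (a b c : ℝ) (ha : 0 ≤ a) (hb : 0 ≤ b) (hc : 0 ≤ c)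
    (tr1 : c ≤ a + b) (tr2 : a ≤ b + c) (tr3 : b ≤ a + c) :
    ∃ (j1 j2 j3 : Fin 3) (s1 s2 s3 : ℝ), 0 ≤ s1 ∧ 0 ≤ s2 ∧ 0 ≤ s3 ∧
      dd j1 j2 s1 s2 = a ∧ dd j1 j3 s1 s3 = b ∧ dd j2 j3 s2 s3 = c := by
  by_cases hc1 : a^2 + a*b + b^2 ≤ c^2
  · obtain ⟨t1, t2, t3, h1, h2, h3, e1, e2, e3⟩ := C1 a b c ha hb hc tr1 tr2 tr3 hc1
    refine ⟨0, 0, 1, t1, t2, t3, h1, h2, h3, ?_, ?_, ?_⟩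
    · rw [dd, if_pos rfl, abs_sub_comm]; exact e1
    · exact sq_dd_eq (by decide) hb e2
    · exact sq_dd_eq (by decide) hc e3
  by_cases hc2 : a^2 + a*c + c^2 ≤ b^2
  · obtain ⟨t1, t2, t3, h1, h2, h3, e1, e2, e3⟩ := C1 a c b ha hc hb tr3 (by linarith) tr1 hc2
    refine ⟨0, 0, 1, t2, t1, t3, h2, h1, h3, ?_, ?_, ?_⟩
    · rw [dd, if_pos rfl]; exact e1
    · exact sq_dd_eq (by decide) hb e3
    · exact sq_dd_eq (by decide) hc e2
  by_cases hc3 : b^2 + b*c + c^2 ≤ a^2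
  · obtain ⟨t1, t2, t3, h1, h2, h3, e1, e2, e3⟩ := C1 b c a hb hc ha tr2 (by linarith) (by linarith) hc3
    refine ⟨0, 1, 0, t2, t3, t1, h2, h3, h1, ?_, ?_, ?_⟩
    · exact sq_dd_eq (by decide) ha e3
    · rw [dd, if_pos rfl]; exact e1
    · rw [dd_symm]; exact sq_dd_eq (by decide) hc e2
  push_neg at hc1 hc2 hc3
  rcases le_total b a with hba | hab
  · obtain ⟨t1, t2, t3, h1, h2, h3, e1, e2, e3⟩ :=
      C4 a b c hb hc hba (le_of_lt hc1) (le_of_lt hc3)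
    exact ⟨2, 0, 1, t1, t2, t3, h1, h2, h3,
      sq_dd_eq (by decide) ha e1, sq_dd_eq (by decide) hb e2, sq_dd_eq (by decide) hc e3⟩
  · obtain ⟨t1, t2, t3, h1, h2, h3, e1, e2, e3⟩ :=
      C4 b a c ha hc hab (by nlinarith) (by nlinarith)
    refine ⟨2, 1, 0, t1, t3, t2, h1, h3, h2, ?_, ?_, ?_⟩
    · exact sq_dd_eq (by decide) ha e2
    · exact sq_dd_eq (by decide) hb e1
    · rw [dd_symm]; exact sq_dd_eq (by decide) hc e3

/-- Two distinct points on one ray cannot be equidistant (distance `c`) from a third point. -/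
lemma same_ray_contra (c t s w : ℝ) (hc : 0 < c) (ht : 0 ≤ t) (hs : 0 ≤ s) (hw : 0 ≤ w)
    (h1 : (t - s)^2 = c^2)
    (h23 : ((t - w)^2 = c^2 ∧ (s - w)^2 = c^2) ∨
           (t^2 + w^2 + t*w = c^2 ∧ s^2 + w^2 + s*w = c^2)) : False := by
  rcases h23 with ⟨h2, h3⟩ | ⟨h2, h3⟩
  · nlinarith [sq_nonneg ((t-s)*(t-w) + c^2/2), sq_nonneg ((t-s)*(t-w) - c^2/2),
      sq_nonneg ((t-s)+(t-w)), sq_nonneg ((t-s)-(t-w)), mul_pos hc hc]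
  · have hz : (t - s)*(t + s + w) = 0 := by linear_combination h2 - h3
    rcases mul_eq_zero.mp hz with h | h
    · nlinarith
    · nlinarith

/-- Rigidity: a point at distance `r` from two points which are `√3 r` apart must be `o`. -/
lemma rigA (r t s w : ℝ) (j k l : Fin 3) (hr : 0 < r)
    (ht : 0 ≤ t) (hs : 0 ≤ s) (hw : 0 ≤ w)
    (h1 : dd j k t s = r) (h2 : dd j l t w = r) (h3 : dd k l s w = Real.sqrt 3 * r) :
    t = 0 := by
  have s3 : (Real.sqrt 3)^2 = 3 := Real.sq_sqrt (by norm_num)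
  rcases eq_or_ne j k with hjk | hjk <;> rcases eq_or_ne j l with hjl | hjl
  · -- j = k, j = l : all on one ray
    rw [dd, if_pos hjk] at h1
    rw [dd, if_pos hjl] at h2
    rw [dd, if_pos (hjk ▸ hjl : k = l)] at h3
    have q1 : (t - s)^2 = r^2 := by rw [← h1, sq_abs]
    have q2 : (t - w)^2 = r^2 := by rw [← h2, sq_abs]
    have q3 : (s - w)^2 = 3*r^2 := by rw [← sq_abs, h3, mul_pow, s3]
    exfalso
    nlinarith [sq_nonneg ((t-s)*(t-w) + r^2/2), sq_nonneg ((t-s)*(t-w) - r^2/2),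
      sq_nonneg ((t-s)+(t-w)), sq_nonneg ((t-s)-(t-w)), mul_pos hr hr]
  · -- j = k, j ≠ l
    have hkl : k ≠ l := fun h => hjl (hjk.trans h)
    rw [dd, if_pos hjk] at h1
    have q2 := dd_eq_sq hjl ht hw h2
    have q3 := dd_eq_sq hkl hs hw h3
    rw [mul_pow, s3] at q3
    rcases (abs_eq hr.le).mp h1 with h | h
    · exfalso; nlinarith
    · -- t - s = -r, s = t + r
      have hsum : r*(s + t + w) = 2*r^2 := by linear_combination q3 - q2 + (s + t + w) * h
      have hsum' : s + t + w = 2*r :=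
        mul_left_cancel₀ (ne_of_gt hr) (by linear_combination hsum)
      have hwv : w = r - 2*t := by linarith
      subst hwv
      have ht3 : (3*t)*(t - r) = 0 := by linear_combination q2
      rcases mul_eq_zero.mp ht3 with h' | h'
      · linarith
      · exfalso; linarith
  · -- j ≠ k, j = l
    have hkl : k ≠ l := fun h => hjk (hjl.trans h.symm)
    rw [dd, if_pos hjl] at h2
    have q1 := dd_eq_sq hjk ht hs h1
    have q3 := dd_eq_sq hkl hs hw h3
    rw [mul_pow, s3] at q3
    rcases (abs_eq hr.le).mp h2 with h | h
    · exfalso; nlinarith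
    · have hsum : r*(w + t + s) = 2*r^2 := by linear_combination q3 - q1 + (w + t + s) * h
      have hsum' : w + t + s = 2*r :=
        mul_left_cancel₀ (ne_of_gt hr) (by linear_combination hsum)
      have hsv : s = r - 2*t := by linarith
      subst hsv
      have ht3 : (3*t)*(t - r) = 0 := by linear_combination q1
      rcases mul_eq_zero.mp ht3 with h' | h'
      · linarith
      · exfalso; linarith
  · rcases eq_or_ne k l with hkl | hkl
    · -- j ≠ k = l
      rw [dd, if_pos hkl] at h3
      have q1 := dd_eq_sq hjk ht hs h1
      have q2 := dd_eq_sq (hkl ▸ hjk) ht hw h2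
      have hz : (s - w)*(s + w + t) = 0 := by linear_combination q1 - q2
      have q3 : (s - w)^2 = 3*r^2 := by rw [← sq_abs, h3, mul_pow, s3]
      rcases mul_eq_zero.mp hz with h | h
      · exfalso; nlinarith
      · exfalso; nlinarith
    · -- all distinct
      have q1 := dd_eq_sq hjk ht hs h1
      have q2 := dd_eq_sq hjl ht hw h2
      have q3 := dd_eq_sq hkl hs hw h3
      rw [mul_pow, s3] at q3
      have hz : (s - w)*(s + w + t) = 0 := by linear_combination q1 - q2
      rcases mul_eq_zero.mp hz with h | h
      · have hsw : s = w := by linarith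
        subst hsw
        have hz2 : (s - r)*(s + r) = 0 := by linear_combination q3/3
        rcases mul_eq_zero.mp hz2 with h' | h'
        · have hsr : s = r := by linarith
          subst hsr
          have hz3 : t*(t + s) = 0 := by linear_combination q1
          rcases mul_eq_zero.mp hz3 with h'' | h''
          · exact h''
          · exfalso; linarith
        · exfalso; linarith
      · exfalso; nlinarith

/-- Rigidity for equilateral triples: unique realization on the three rays. -/
lemma rigB (c t1 t2 t3 : ℝ) (j1 j2 j3 : Fin 3) (hc : 0 < c)
    (h1 : 0 ≤ t1) (h2 : 0 ≤ t2) (h3 : 0 ≤ t3)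
    (d12 : dd j1 j2 t1 t2 = c) (d13 : dd j1 j3 t1 t3 = c) (d23 : dd j2 j3 t2 t3 = c) :
    t1 = t2 ∧ t1 = t3 ∧ Real.sqrt 3 * t1 = c ∧ (∀ j : Fin 3, j = j1 ∨ j = j2 ∨ j = j3) := by
  have hne12 : j1 ≠ j2 := by
    intro he
    rw [dd, if_pos he] at d12
    refine same_ray_contra c t1 t2 t3 hc h1 h2 h3 (by rw [← d12, sq_abs]) ?_
    rcases eq_or_ne j1 j3 with he3 | he3
    · left
      rw [dd, if_pos he3] at d13
      rw [dd, if_pos (he ▸ he3 : j2 = j3)] at d23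
      exact ⟨by rw [← d13, sq_abs], by rw [← d23, sq_abs]⟩
    · right
      exact ⟨dd_eq_sq he3 h1 h3 d13, dd_eq_sq (he ▸ he3) h2 h3 d23⟩
  have hne13 : j1 ≠ j3 := by
    intro he
    rw [dd, if_pos he] at d13
    refine same_ray_contra c t1 t3 t2 hc h1 h3 h2 (by rw [← d13, sq_abs]) ?_
    rcases eq_or_ne j1 j2 with he2 | he2
    · exact absurd he2 hne12
    · right
      refine ⟨dd_eq_sq he2 h1 h2 d12, ?_⟩
      rw [dd_symm] at d23
      exact dd_eq_sq (fun hh => he2 (he.trans hh)) h3 h2 d23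
  have hne23 : j2 ≠ j3 := by
    intro he
    rw [dd, if_pos he] at d23
    refine same_ray_contra c t2 t3 t1 hc h2 h3 h1 (by rw [← d23, sq_abs]) ?_
    right
    rw [dd_symm] at d12 d13
    exact ⟨dd_eq_sq (Ne.symm hne12) h2 h1 d12, dd_eq_sq (Ne.symm hne13) h3 h1 d13⟩
  have q1 := dd_eq_sq hne12 h1 h2 d12
  have q2 := dd_eq_sq hne13 h1 h3 d13
  have q3 := dd_eq_sq hne23 h2 h3 d23
  have hz : (t2 - t3)*(t2 + t3 + t1) = 0 := by linear_combination q1 - q2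
  have ht23 : t2 = t3 := by
    rcases mul_eq_zero.mp hz with h | h
    · linarith
    · exfalso; nlinarith
  subst ht23
  have hz2 : (t1 - t2)*(t1 + 2*t2) = 0 := by linear_combination q1 - q3
  have ht12 : t1 = t2 := by
    rcases mul_eq_zero.mp hz2 with h | h
    · linarith
    · exfalso; nlinarith
  subst ht12
  have h33 : 3*t1^2 = c^2 := by linear_combination q3
  refine ⟨rfl, rfl, ?_, ?_⟩
  · have : Real.sqrt 3 * t1 = Real.sqrt (3*t1^2) := by
      rw [Real.sqrt_mul (by norm_num), Real.sqrt_sq h1]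
    rw [this, h33, Real.sqrt_sq hc.le]
  · have : ∀ a b c j : Fin 3, a ≠ b → a ≠ c → b ≠ c → (j = a ∨ j = b ∨ j = c) := by decide
    exact fun j => this j1 j2 j3 j hne12 hne13 hne23

lemma hinner_aux (u v : EuclideanSpace ℝ (Fin 2)) (hu : ‖u‖ = 1) (hv : ‖v‖ = 1)
    (hang : InnerProductGeometry.angle u v = 2 * Real.pi / 3) :
    inner ℝ u v = -(1/2) := by
  unfold InnerProductGeometry.angle at hang
  rw [hu, hv, mul_one, div_one] at hang
  have hb : |inner ℝ u v| ≤ 1 := by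
    have := abs_real_inner_le_norm u v
    rwa [hu, hv, mul_one] at this
  rw [abs_le] at hb
  have := Real.cos_arccos hb.1 hb.2
  rw [hang] at this
  rw [← this, show 2 * Real.pi / 3 = Real.pi - Real.pi/3 by ring,
    Real.cos_pi_sub, Real.cos_pi_div_three]


lemma dist_pt (o : EuclideanSpace ℝ (Fin 2)) (u : Fin 3 → EuclideanSpace ℝ (Fin 2))
    (hu : ∀ k, ‖u k‖ = 1)
    (hang : ∀ j k, j ≠ k → InnerProductGeometry.angle (u j) (u k) = 2 * Real.pi / 3)
    (j k : Fin 3) (t s : ℝ) :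
    dist (o + t • u j) (o + s • u k) = dd j k t s := by
  rcases eq_or_ne j k with h | h
  · rw [dd, if_pos h, h, dist_eq_norm]
    rw [show o + t • u k - (o + s • u k) = (t - s) • u k by module]
    rw [norm_smul, hu, Real.norm_eq_abs, mul_one]
  · rw [dd, if_neg h]
    have hsq : (dist (o + t • u j) (o + s • u k))^2 = t^2 + s^2 + t*s := by
      rw [dist_eq_norm, show o + t • u j - (o + s • u k) = t • u j - s • u k by module]
      rw [norm_sub_sq_real, real_inner_smul_left, real_inner_smul_right,
        hinner_aux (u j) (u k) (hu j) (hu k) (hang j k h), norm_smul, norm_smul, hu, hu]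
      simp only [Real.norm_eq_abs, mul_one]
      rw [sq_abs, sq_abs]; ring
    rw [show dist (o + t • u j) (o + s • u k) =
      Real.sqrt ((dist (o + t • u j) (o + s • u k))^2) from (Real.sqrt_sq dist_nonneg).symm, hsq]

/-- The union of three rays in the Euclidean plane emanating from a common point `o`, each
pair of rays making the angle `2π/3`, is a minimal universal metric space for the class of
all metric spaces with at most three points. -/
theorem statement18 (o : EuclideanSpace ℝ (Fin 2)) (u : Fin 3 → EuclideanSpace ℝ (Fin 2))
    (hu : ∀ k, ‖u k‖ = 1)
    (hang : ∀ j k, j ≠ k → InnerProductGeometry.angle (u j) (u k) = 2 * Real.pi / 3)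
    (X : Set (EuclideanSpace ℝ (Fin 2))) (hX : X = ⋃ k, Ray o (u k)) :
    F3Universal ↥X ∧ ∀ S : Set ↥X, F3Universal ↥S → S = Set.univ := by
  have hdist : ∀ (j k : Fin 3) (t s : ℝ), dist (o + t • u j) (o + s • u k) = dd j k t s :=
    dist_pt o u hu hang
  have hmem : ∀ (j : Fin 3) {t : ℝ}, 0 ≤ t → o + t • u j ∈ X := by
    intro j t ht
    rw [hX]
    exact Set.mem_iUnion.2 ⟨j, ⟨t, ht, rfl⟩⟩
  have hrep : ∀ p ∈ X, ∃ (j : Fin 3) (t : ℝ), 0 ≤ t ∧ p = o + t • u j := by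
    intro p hp
    rw [hX] at hp
    obtain ⟨j, t, ht, he⟩ := Set.mem_iUnion.1 hp
    exact ⟨j, t, ht, he⟩
  constructor
  · -- universality
    intro A _ hcard
    by_cases hA : Nonempty A
    · rw [show (3 : Cardinal.{u_1}) = Cardinal.mk (ULift.{u_1} (Fin 3)) by simp,
        Cardinal.le_def] at hcard
      obtain ⟨e⟩ := hcard
      have hinj : Function.Injective (fun a => (e a).down) := by
        intro a b h
        exact e.injective (ULift.ext _ _ h)
      set ι : A → Fin 3 := fun a => (e a).down with hιdef
      set σ : Fin 3 → A := Function.invFun ι with hσdef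
      have hσ : ∀ a, σ (ι a) = a := fun a => Function.leftInverse_invFun hinj a
      obtain ⟨j1, j2, j3, s1, s2, s3, hs1, hs2, hs3, e12, e13, e23⟩ :=
        key (dist (σ 0) (σ 1)) (dist (σ 0) (σ 2)) (dist (σ 1) (σ 2))
          dist_nonneg dist_nonneg dist_nonneg
          (by have := dist_triangle (σ 1) (σ 0) (σ 2)
              rwa [dist_comm (σ 1) (σ 0)] at this)
          (by have := dist_triangle (σ 0) (σ 2) (σ 1)
              rwa [dist_comm (σ 2) (σ 1)] at this)
          (dist_triangle (σ 0) (σ 1) (σ 2))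
      set V : Fin 3 → ↥X := ![⟨o + s1 • u j1, hmem j1 hs1⟩, ⟨o + s2 • u j2, hmem j2 hs2⟩,
        ⟨o + s3 • u j3, hmem j3 hs3⟩] with hV
      have k01 : dist (V 0) (V 1) = dist (σ 0) (σ 1) := by
        rw [hV]
        show dist (⟨o + s1 • u j1, _⟩ : ↥X) ⟨o + s2 • u j2, _⟩ = _
        rw [Subtype.dist_eq, hdist]
        exact e12
      have k02 : dist (V 0) (V 2) = dist (σ 0) (σ 2) := by
        rw [hV]
        show dist (⟨o + s1 • u j1, _⟩ : ↥X) ⟨o + s3 • u j3, _⟩ = _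
        rw [Subtype.dist_eq, hdist]
        exact e13
      have k12 : dist (V 1) (V 2) = dist (σ 1) (σ 2) := by
        rw [hV]
        show dist (⟨o + s2 • u j2, _⟩ : ↥X) ⟨o + s3 • u j3, _⟩ = _
        rw [Subtype.dist_eq, hdist]
        exact e23
      have hVd : ∀ i i' : Fin 3, dist (V i) (V i') = dist (σ i) (σ i') := by
        intro i i'
        fin_cases i <;> fin_cases i'
        · rw [dist_self, dist_self]
        · exact k01
        · exact k02
        · show dist (V 1) (V 0) = dist (σ 1) (σ 0)
          rw [dist_comm, dist_comm (σ 1) (σ 0)]; exact k01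
        · rw [dist_self, dist_self]
        · exact k12
        · show dist (V 2) (V 0) = dist (σ 2) (σ 0)
          rw [dist_comm, dist_comm (σ 2) (σ 0)]; exact k02
        · show dist (V 2) (V 1) = dist (σ 2) (σ 1)
          rw [dist_comm, dist_comm (σ 2) (σ 1)]; exact k12
        · rw [dist_self, dist_self]
      refine ⟨fun a => V (ι a), fun a b => ?_⟩
      rw [hVd (ι a) (ι b), hσ a, hσ b]
    · have : IsEmpty A := not_nonempty_iff.mp hA
      exact ⟨fun a => isEmptyElim a, fun a b => isEmptyElim a⟩
  · -- minimality
    intro S hS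
    rw [Set.eq_univ_iff_forall]
    rintro ⟨p, hp⟩
    obtain ⟨j, t, ht, rfl⟩ := hrep p hp
    have huniv : ∀ W : Fin 3 → EuclideanSpace ℝ (Fin 2), (∀ i, W i ∈ X) →
        ∃ F : Fin 3 → ↥S, ∀ i i' : Fin 3,
          dist ((F i : ↥X) : EuclideanSpace ℝ (Fin 2)) ((F i' : ↥X)) = dist (W i) (W i') := by
      intro W hWmem
      have hsurj : Function.Surjective
          (fun i : ULift.{u_2} (Fin 3) =>
            (⟨⟨W i.down, Set.mem_range_self _⟩⟩ : ULift.{u_2} ↥(Set.range W))) := by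
        rintro ⟨⟨x, ⟨i, rfl⟩⟩⟩
        exact ⟨⟨i⟩, rfl⟩
      have hcard : Cardinal.mk (ULift.{u_2} ↥(Set.range W)) ≤ 3 := by
        have := Cardinal.mk_le_of_surjective hsurj
        simpa using this
      obtain ⟨f, hf⟩ := hS _ hcard
      refine ⟨fun i => f ⟨⟨W i, Set.mem_range_self i⟩⟩, fun i i' => ?_⟩
      have := hf ⟨⟨W i, Set.mem_range_self i⟩⟩ ⟨⟨W i', Set.mem_range_self i'⟩⟩
      rw [Subtype.dist_eq, Subtype.dist_eq] at this
      rw [this]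
      rfl
    rcases eq_or_lt_of_le ht with ht0 | ht0
    · -- t = 0 : the branch point o
      obtain ⟨F, hF⟩ := huniv ![o + (0:ℝ) • u 0, o + (1:ℝ) • u 0, o + (1:ℝ) • u 1]
        (by intro i; fin_cases i <;> exact hmem _ (by norm_num))
      obtain ⟨k0, r0, hr0, hq0⟩ := hrep _ ((F 0 : ↥X)).2
      obtain ⟨k1, r1, hr1, hq1⟩ := hrep _ ((F 1 : ↥X)).2
      obtain ⟨k2, r2, hr2, hq2⟩ := hrep _ ((F 2 : ↥X)).2
      have d01 : dd k0 k1 r0 r1 = 1 := by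
        rw [← hdist]
        rw [← hq0, ← hq1, hF 0 1]
        have : dist (o + (0:ℝ) • u 0) (o + (1:ℝ) • u 0) = dd 0 0 0 1 := hdist 0 0 0 1
        simp only [Matrix.cons_val_zero, Matrix.cons_val_one, Matrix.head_cons]
        rw [this, dd, if_pos rfl]
        norm_num
      have d02 : dd k0 k2 r0 r2 = 1 := by
        rw [← hdist, ← hq0, ← hq2, hF 0 2]
        have : dist (o + (0:ℝ) • u 0) (o + (1:ℝ) • u 1) = dd 0 1 0 1 := hdist 0 1 0 1
        simp only [Matrix.cons_val_zero, Matrix.cons_val_two, Matrix.tail_cons, Matrix.head_cons]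
        rw [this, dd, if_neg (by decide)]
        norm_num
      have d12 : dd k1 k2 r1 r2 = Real.sqrt 3 * 1 := by
        rw [← hdist, ← hq1, ← hq2, hF 1 2]
        have : dist (o + (1:ℝ) • u 0) (o + (1:ℝ) • u 1) = dd 0 1 1 1 := hdist 0 1 1 1
        simp only [Matrix.cons_val_zero, Matrix.cons_val_one, Matrix.cons_val_two, Matrix.tail_cons, Matrix.head_cons]
        rw [this, dd, if_neg (by decide), mul_one]
        norm_num
      have hr00 : r0 = 0 := rigA 1 r0 r1 r2 k0 k1 k2 one_pos hr0 hr1 hr2 d01 d02 d12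
      have hEq : (⟨o + t • u j, hp⟩ : ↥X) = (F 0 : ↥X) := by
        apply Subtype.ext
        show o + t • u j = ((F 0 : ↥X) : EuclideanSpace ℝ (Fin 2))
        rw [hq0, hr00, ← ht0]
        simp
      rw [hEq]
      exact (F 0).2
    · -- t > 0 : points on the rays
      have hs3pos : (0:ℝ) < Real.sqrt 3 := Real.sqrt_pos.mpr (by norm_num)
      have hddt : ∀ i i' : Fin 3, i ≠ i' → dd i i' t t = Real.sqrt 3 * t := by
        intro i i' h
        rw [dd, if_neg h, show t^2 + t^2 + t*t = 3*t^2 by ring,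
          Real.sqrt_mul (by norm_num), Real.sqrt_sq ht]
      obtain ⟨F, hF⟩ := huniv ![o + t • u 0, o + t • u 1, o + t • u 2]
        (by intro i; fin_cases i <;> exact hmem _ ht)
      obtain ⟨k0, r0, hr0, hq0⟩ := hrep _ ((F 0 : ↥X)).2
      obtain ⟨k1, r1, hr1, hq1⟩ := hrep _ ((F 1 : ↥X)).2
      obtain ⟨k2, r2, hr2, hq2⟩ := hrep _ ((F 2 : ↥X)).2
      have d01 : dd k0 k1 r0 r1 = Real.sqrt 3 * t := by
        rw [← hdist, ← hq0, ← hq1, hF 0 1]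
        have : dist (o + t • u 0) (o + t • u 1) = dd 0 1 t t := hdist 0 1 t t
        simp only [Matrix.cons_val_zero, Matrix.cons_val_one, Matrix.head_cons]
        rw [this, hddt 0 1 (by decide)]
      have d02 : dd k0 k2 r0 r2 = Real.sqrt 3 * t := by
        rw [← hdist, ← hq0, ← hq2, hF 0 2]
        have : dist (o + t • u 0) (o + t • u 2) = dd 0 2 t t := hdist 0 2 t t
        simp only [Matrix.cons_val_zero, Matrix.cons_val_two, Matrix.tail_cons, Matrix.head_cons]
        rw [this, hddt 0 2 (by decide)]
      have d12 : dd k1 k2 r1 r2 = Real.sqrt 3 * t := by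
        rw [← hdist, ← hq1, ← hq2, hF 1 2]
        have : dist (o + t • u 1) (o + t • u 2) = dd 1 2 t t := hdist 1 2 t t
        simp only [Matrix.cons_val_zero, Matrix.cons_val_one, Matrix.cons_val_two, Matrix.tail_cons, Matrix.head_cons]
        rw [this, hddt 1 2 (by decide)]
      obtain ⟨h01, h02, hrt, hcover⟩ :=
        rigB (Real.sqrt 3 * t) r0 r1 r2 k0 k1 k2 (by positivity) hr0 hr1 hr2 d01 d02 d12
      have hr0t : r0 = t := mul_left_cancel₀ (ne_of_gt hs3pos) hrt
      rcases hcover j with hj | hj | hj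
      · have hEq : (⟨o + t • u j, hp⟩ : ↥X) = (F 0 : ↥X) := by
          apply Subtype.ext
          show o + t • u j = ((F 0 : ↥X) : EuclideanSpace ℝ (Fin 2))
          rw [hq0, hr0t, hj]
        rw [hEq]; exact (F 0).2
      · have hEq : (⟨o + t • u j, hp⟩ : ↥X) = (F 1 : ↥X) := by
          apply Subtype.ext
          show o + t • u j = ((F 1 : ↥X) : EuclideanSpace ℝ (Fin 2))
          rw [hq1, ← h01, hr0t, hj]
        rw [hEq]; exact (F 1).2
      · have hEq : (⟨o + t • u j, hp⟩ : ↥X) = (F 2 : ↥X) := by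
          apply Subtype.ext
          show o + t • u j = ((F 2 : ↥X) : EuclideanSpace ℝ (Fin 2))
          rw [hq2, ← h02, hr0t, hj]
        rw [hEq]; exact (F 2).2
end
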